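/- arXiv:math/0703190 — 3 statements merged into one kernel-verified Lean document; each statement's English description precedes it below -/
import Mathlib

section
/- If a semigroup S has an automatic structure, then it has an automatic structure (A, L) with uniqueness, i.e., such that the restriction of the representation map ψ to L is a bijection onto S. -/
namespace AutoSg

/-- Evaluation of a nonempty word over alphabet `A` in a semigroup `S`
via the letter-interpretation map `ψ`; the empty word evaluates to `none`. -/
def evalWord {S : Type*} [Semigroup S] {A : Type*} (ψ : A → S) : List A → Option S
  | [] => none
  | a :: w => some ((w.map ψ).foldl (· * ·) (ψ a))

/-- The standard padding map `δ_A` on pairs of words, with `none` playing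
the role of the padding symbol `$`. -/
def padMap {A : Type*} (u v : List A) : List (Option A × Option A) :=
  List.zipWith Prod.mk (u.map some ++ List.replicate (v.length - u.length) none)
    (v.map some ++ List.replicate (u.length - v.length) none)

/-- `(A, L)` is an automatic structure for the semigroup `S` with respect to `ψ`. -/
structure IsAutomaticStructure (S : Type*) [Semigroup S] {A : Type*} [Finite A]
    (ψ : A → S) (L : Language A) : Prop where
  nonempty_words : ∀ w ∈ L, w ≠ []
  regular : L.IsRegular
  onto : ∀ s : S, ∃ w ∈ L, evalWord ψ w = some s
  eq_regular : Language.IsRegular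
    {p : List (Option A × Option A) |
      ∃ u ∈ L, ∃ v ∈ L, p = padMap u v ∧ evalWord ψ u = evalWord ψ v}
  mul_regular : ∀ a : A, Language.IsRegular
    {p : List (Option A × Option A) |
      ∃ u ∈ L, ∃ v ∈ L, p = padMap u v ∧ evalWord ψ (u ++ [a]) = evalWord ψ v}

/-- An automatic structure with uniqueness: each element of `S` is represented
by exactly one word of `L`. -/
structure IsAutomaticStructureWithUniqueness (S : Type*) [Semigroup S] {A : Type*} [Finite A]
    (ψ : A → S) (L : Language A) extends IsAutomaticStructure S ψ L : Prop where
  unique : ∀ u ∈ L, ∀ v ∈ L, evalWord ψ u = evalWord ψ v → u = v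

/-- A semigroup is automatic if it admits an automatic structure. -/
def IsAutomaticSemigroup (S : Type*) [Semigroup S] : Prop :=
  ∃ (A : Type) (_ : Finite A) (ψ : A → S) (L : Language A), IsAutomaticStructure S ψ L

end AutoSg

namespace AutoSgProof
open AutoSg
set_option linter.unusedSectionVars false

variable {A : Type*} {α : Type*} {β : Type*}

/-! ### Basic facts about `padMap` -/

lemma padMap_nil_left (v : List A) :
    padMap ([] : List A) v = v.map (fun b => ((none : Option A), some b)) := by
  induction v with
  | nil => rfl
  | cons b v ih => simpa [padMap, List.replicate_succ] using ih

lemma padMap_nil_right (u : List A) :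
    padMap u ([] : List A) = u.map (fun a => (some a, (none : Option A))) := by
  induction u with
  | nil => rfl
  | cons a u ih => simpa [padMap, List.replicate_succ] using ih

lemma padMap_cons_cons (a b : A) (u v : List A) :
    padMap (a :: u) (b :: v) = (some a, some b) :: padMap u v := by
  simp [padMap]

lemma padMap_fst (u v : List A) : (padMap u v).filterMap Prod.fst = u := by
  induction u generalizing v with
  | nil =>
      simp only [padMap_nil_left, List.filterMap_map, Function.comp_def]
      simp
  | cons a u ih =>
      cases v with
      | nil => simp [padMap_nil_right, List.filterMap_map, Function.comp_def]
      | cons b v => simp [padMap_cons_cons, ih]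

lemma padMap_snd (u v : List A) : (padMap u v).filterMap Prod.snd = v := by
  induction u generalizing v with
  | nil => simp [padMap_nil_left, List.filterMap_map, Function.comp_def]
  | cons a u ih =>
      cases v with
      | nil =>
        simp only [padMap_nil_right, List.filterMap_map, Function.comp_def]
        simp
      | cons b v => simp [padMap_cons_cons, ih]

def zipSS (u w : List A) : List (Option A × Option A) :=
  List.zipWith (fun a b => (some a, some b)) u w

@[simp] lemma zipSS_nil_left (w : List A) : zipSS ([] : List A) w = [] := rfl
@[simp] lemma zipSS_cons_cons (a b : A) (u w : List A) :
    zipSS (a :: u) (b :: w) = (some a, some b) :: zipSS u w := rfl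

lemma padMap_append (u t w : List A) (h : u.length = w.length) :
    padMap (u ++ t) w = zipSS u w ++ t.map (fun b => (some b, (none : Option A))) := by
  induction u generalizing w with
  | nil =>
      obtain rfl : w = [] := List.length_eq_zero_iff.mp (by simpa using h.symm)
      simp [padMap_nil_right]
  | cons a u ih =>
      cases w with
      | nil => simp at h
      | cons c w =>
          simp only [List.cons_append, padMap_cons_cons, zipSS_cons_cons, List.cons_append]
          rw [ih _ (by simpa using h)]

lemma evalFrom_cons {α σ : Type*} (M : DFA α σ) (q : σ) (x : α) (p : List α) :
    M.evalFrom q (x :: p) = M.evalFrom (M.step q x) p := rfl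

/-! ### Closure properties of regular languages -/

section Closure

def interDFA {σ₁ σ₂ : Type} (M₁ : DFA α σ₁) (M₂ : DFA α σ₂) : DFA α (σ₁ × σ₂) where
  step s a := (M₁.step s.1 a, M₂.step s.2 a)
  start := (M₁.start, M₂.start)
  accept := {s | s.1 ∈ M₁.accept ∧ s.2 ∈ M₂.accept}

lemma interDFA_evalFrom {σ₁ σ₂ : Type} (M₁ : DFA α σ₁) (M₂ : DFA α σ₂)
    (s : σ₁ × σ₂) (w : List α) :
    (interDFA M₁ M₂).evalFrom s w = (M₁.evalFrom s.1 w, M₂.evalFrom s.2 w) := by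
  induction w generalizing s with
  | nil => rfl
  | cons a w ih => exact ih (M₁.step s.1 a, M₂.step s.2 a)

lemma isRegular_inter {L₁ L₂ : Language α} (h₁ : L₁.IsRegular) (h₂ : L₂.IsRegular) :
    Language.IsRegular {w | w ∈ L₁ ∧ w ∈ L₂} := by
  obtain ⟨σ₁, _, M₁, rfl⟩ := h₁
  obtain ⟨σ₂, _, M₂, rfl⟩ := h₂
  refine ⟨σ₁ × σ₂, inferInstance, interDFA M₁ M₂, ?_⟩
  ext w
  rw [DFA.mem_accepts, show (interDFA M₁ M₂).eval w
      = (M₁.evalFrom M₁.start w, M₂.evalFrom M₂.start w) from interDFA_evalFrom M₁ M₂ _ w]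
  exact Iff.rfl

lemma isRegular_compl {L : Language α} (h : L.IsRegular) :
    Language.IsRegular {w | w ∉ L} := by
  obtain ⟨σ, _, M, rfl⟩ := h
  exact ⟨σ, inferInstance, ⟨M.step, M.start, {s | s ∉ M.accept}⟩, rfl⟩

/-- preimage DFA of a regular language under letterwise `filterMap` -/
def fmDFA {σ : Type} (f : β → Option α) (M : DFA α σ) : DFA β σ where
  step s b := match f b with
    | some a => M.step s a
    | none => s
  start := M.start
  accept := M.accept

lemma fmDFA_evalFrom {σ : Type} (f : β → Option α) (M : DFA α σ) (s : σ) (p : List β) :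
    (fmDFA f M).evalFrom s p = M.evalFrom s (p.filterMap f) := by
  induction p generalizing s with
  | nil => rfl
  | cons b p ih =>
      show (fmDFA f M).evalFrom ((fmDFA f M).step s b) p = _
      rw [List.filterMap_cons]
      rcases hb : f b with _ | a
      · have hs : (fmDFA f M).step s b = s := by simp [fmDFA, hb]
        rw [hs, ih]
      · have hs : (fmDFA f M).step s b = M.step s a := by simp [fmDFA, hb]
        rw [hs, ih]
        rfl

lemma isRegular_filterMap_preimage (f : β → Option α) {L : Language α} (h : L.IsRegular) :
    Language.IsRegular {p : List β | p.filterMap f ∈ L} := by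
  obtain ⟨σ, _, M, rfl⟩ := h
  refine ⟨σ, inferInstance, fmDFA f M, ?_⟩
  ext p
  rw [DFA.mem_accepts, show (fmDFA f M).eval p = M.evalFrom M.start (p.filterMap f) from
    fmDFA_evalFrom f M _ p]
  exact Iff.rfl

end Closure

/-! ### Bijective base-`k` rank of words (shortlex order as a total well-order) -/

section Rank
variable (k : ℕ) (d : A → ℕ)

/-- bijective base-`k` numeration of words -/
def rk (w : List A) : ℕ := w.foldl (fun n a => k * n + d a) 0

/-- minimum rank of a word of length `n` -/
def mrk (n : ℕ) : ℕ := ∑ i ∈ Finset.range n, k ^ i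

lemma mrk_succ (n : ℕ) : mrk k (n + 1) = mrk k n + k ^ n := Finset.sum_range_succ _ _

variable {k d}
variable (hk : 1 ≤ k) (hd1 : ∀ a, 1 ≤ d a) (hd2 : ∀ a, d a ≤ k)

lemma mrk_mono : Monotone (mrk k) := by
  intro m n h
  exact Finset.sum_le_sum_of_subset (Finset.range_subset_range.mpr h)

lemma foldl_rk (x : List A) (n₀ : ℕ) :
    x.foldl (fun n a => k * n + d a) n₀ = n₀ * k ^ x.length + rk k d x := by
  induction x generalizing n₀ with
  | nil => simp [rk]
  | cons a x ih =>
      simp only [List.foldl_cons, List.length_cons]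
      rw [ih, show rk k d (a :: x) = (d a) * k ^ x.length + rk k d x from by
        show List.foldl _ (k * 0 + d a) x = _
        rw [ih]; ring_nf]
      ring

lemma rk_cons (a : A) (x : List A) :
    rk k d (a :: x) = d a * k ^ x.length + rk k d x := by
  show List.foldl _ (k * 0 + d a) x = _
  rw [foldl_rk]; ring_nf

include hd1 hd2 in
lemma rk_bounds (x : List A) :
    mrk k x.length ≤ rk k d x ∧ rk k d x < mrk k x.length + k ^ x.length := by
  induction x with
  | nil => simp [rk, mrk]
  | cons a x ih =>
      obtain ⟨hlo, hhi⟩ := ih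
      rw [rk_cons, List.length_cons, mrk_succ]
      constructor
      · have h1 : 1 * k ^ x.length ≤ d a * k ^ x.length :=
          Nat.mul_le_mul_right _ (hd1 a)
        omega
      · have h2 : d a * k ^ x.length ≤ k * k ^ x.length :=
          Nat.mul_le_mul_right _ (hd2 a)
        have : k * k ^ x.length = k ^ (x.length + 1) := (pow_succ k x.length).symm ▸ by ring
        omega

include hk hd1 hd2 in
lemma rk_lt_of_length_lt {u v : List A} (h : u.length < v.length) :
    rk k d u < rk k d v := by
  have hu := (rk_bounds hd1 hd2 u).2
  have hv := (rk_bounds hd1 hd2 v).1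
  have h1 : mrk k u.length + k ^ u.length = mrk k (u.length + 1) := (mrk_succ k _).symm
  have h2 : mrk k (u.length + 1) ≤ mrk k v.length := mrk_mono h
  omega

include hk hd1 hd2 in
lemma rk_cons_lt_of_head_lt {a b : A} {x y : List A} (hlen : x.length = y.length)
    (hab : d a < d b) : rk k d (a :: x) < rk k d (b :: y) := by
  have hx := (rk_bounds hd1 hd2 x).2
  have hy := (rk_bounds hd1 hd2 y).1
  rw [rk_cons, rk_cons, hlen]
  have h1 : (d a + 1) * k ^ y.length ≤ d b * k ^ y.length := Nat.mul_le_mul_right _ hab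
  rw [hlen] at hx
  nlinarith [pow_pos (Nat.lt_of_lt_of_le Nat.zero_lt_one hk) y.length]

include hk hd1 in
lemma rk_pos (a : A) (x : List A) : 0 < rk k d (a :: x) := by
  have h1 : 1 ≤ d a := hd1 a
  have h2 : 0 < k ^ x.length := pow_pos hk _
  have := rk_cons (d := d) (k := k) a x
  nlinarith

include hk hd1 hd2 in
lemma rk_injective (hdinj : Function.Injective d) : Function.Injective (rk k d (A := A)) := by
  intro u v h
  induction u generalizing v with
  | nil =>
      cases v with
      | nil => rfl
      | cons b y =>
          exfalso
          have := rk_lt_of_length_lt hk hd1 hd2 (u := []) (v := b :: y) (by simp)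
          omega
  | cons a x ih =>
      cases v with
      | nil =>
          exfalso
          have := rk_lt_of_length_lt hk hd1 hd2 (u := []) (v := a :: x) (by simp)
          simp [rk] at this h
          omega
      | cons b y =>
          have hlen : x.length = y.length := by
            by_contra hne
            rcases Nat.lt_or_ge x.length y.length with hlt | hge
            · exact absurd h (Nat.ne_of_lt (rk_lt_of_length_lt hk hd1 hd2 (by simpa using hlt)))
            · have : y.length < x.length := lt_of_le_of_ne hge (fun e => hne e.symm)
              exact absurd h.symm
                (Nat.ne_of_lt (rk_lt_of_length_lt hk hd1 hd2 (by simpa using this)))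
          have hab : d a = d b := by
            rcases lt_trichotomy (d a) (d b) with hlt | heq | hgt
            · exact absurd h (Nat.ne_of_lt (rk_cons_lt_of_head_lt hk hd1 hd2 hlen hlt))
            · exact heq
            · exact absurd h.symm
                (Nat.ne_of_lt (rk_cons_lt_of_head_lt hk hd1 hd2 hlen.symm hgt))
          have hxy : rk k d x = rk k d y := by
            rw [rk_cons, rk_cons, hlen, hab] at h
            omega
          rw [hdinj hab, ih hxy]

end Rank

/-! ### A DFA deciding the shortlex comparison of padded pairs -/

section SL
variable (d : A → ℕ)

inductive St : Type where
  | EQ | LT | GT | UEND | DEAD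
  deriving DecidableEq

instance : Fintype St :=
  ⟨{St.EQ, St.LT, St.GT, St.UEND, St.DEAD}, fun x => by cases x <;> simp⟩

def slDFA : DFA (Option A × Option A) St where
  step q x := match q, x with
    | St.EQ, (some a, some b) =>
        if d a < d b then St.LT else if d b < d a then St.GT else St.EQ
    | St.EQ, (none, some _) => St.UEND
    | St.LT, (some _, some _) => St.LT
    | St.LT, (none, some _) => St.UEND
    | St.GT, (some _, some _) => St.GT
    | St.GT, (none, some _) => St.UEND
    | St.UEND, (none, some _) => St.UEND
    | _, _ => St.DEAD
  start := St.EQ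
  accept := {q | q = St.LT ∨ q = St.UEND}

lemma slDFA_dead (p : List (Option A × Option A)) :
    (slDFA d).evalFrom St.DEAD p = St.DEAD := by
  induction p with
  | nil => rfl
  | cons x p ih =>
      rw [evalFrom_cons]
      have : (slDFA d).step St.DEAD x = St.DEAD := by
        rcases x with ⟨_ | a, _ | b⟩ <;> rfl
      rw [this, ih]

lemma slDFA_uend_nilrun (v : List A) :
    (slDFA d).evalFrom St.UEND (padMap ([] : List A) v) = St.UEND := by
  rw [padMap_nil_left]
  induction v with
  | nil => rfl
  | cons c w ih => exact ih

variable {k : ℕ} {d}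
variable (hk : 1 ≤ k) (hd1 : ∀ a, 1 ≤ d a) (hd2 : ∀ a, d a ≤ k)
  (hdinj : Function.Injective d)

include hk hd1 hd2 hdinj in
lemma slDFA_correct : ∀ u v : List A,
    ((slDFA d).evalFrom St.UEND (padMap u v) ∈ (slDFA d).accept ↔ u = []) ∧
    ((slDFA d).evalFrom St.LT (padMap u v) ∈ (slDFA d).accept ↔ u.length ≤ v.length) ∧
    ((slDFA d).evalFrom St.GT (padMap u v) ∈ (slDFA d).accept ↔ u.length < v.length) ∧
    ((slDFA d).evalFrom St.EQ (padMap u v) ∈ (slDFA d).accept ↔ rk k d u < rk k d v) := by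
  have Rlen : ∀ {u v : List A}, u.length < v.length → rk k d u < rk k d v :=
    fun h => rk_lt_of_length_lt hk hd1 hd2 h
  have Rhead : ∀ {a b : A} {x y : List A}, x.length = y.length → d a < d b →
      rk k d (a :: x) < rk k d (b :: y) :=
    fun h1 h2 => rk_cons_lt_of_head_lt hk hd1 hd2 h1 h2
  intro u
  induction u with
  | nil =>
      intro v
      cases v with
      | nil =>
          refine ⟨?_, ?_, ?_, ?_⟩ <;> simp [slDFA, DFA.evalFrom, rk, padMap]
      | cons b v =>
          have huend : ∀ q : St, q ≠ St.DEAD →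
              (slDFA d).step q ((none : Option A), some b) = St.UEND := by
            intro q hq; cases q <;> first | rfl | exact absurd rfl hq
          have run : ∀ q : St, q ≠ St.DEAD →
              (slDFA d).evalFrom q (padMap ([] : List A) (b :: v)) = St.UEND := by
            intro q hq
            rw [show padMap ([] : List A) (b :: v) =
                ((none : Option A), some b) :: padMap ([] : List A) v from by
              simpa using padMap_nil_left (b :: v) ▸ (by simp [padMap_nil_left])]
            rw [evalFrom_cons, huend q hq, slDFA_uend_nilrun]
          refine ⟨?_, ?_, ?_, ?_⟩
          · rw [run St.UEND (by simp)]; simp [slDFA]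
          · rw [run St.LT (by simp)]; simp [slDFA]
          · rw [run St.GT (by simp)]; simp [slDFA]
          · rw [run St.EQ (by simp)]
            simp only [slDFA]
            constructor
            · intro _
              show rk k d [] < rk k d (b :: v)
              have := rk_pos hk hd1 b v
              simpa [rk] using this
            · intro _; right; rfl
  | cons a u ih =>
      intro v
      cases v with
      | nil =>
          have hdead : ∀ q : St, (slDFA d).step q (some a, (none : Option A)) = St.DEAD := by
            intro q; cases q <;> rfl
          have run : ∀ q : St,
              (slDFA d).evalFrom q (padMap (a :: u) ([] : List A)) = St.DEAD := by
            intro q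
            rw [show padMap (a :: u) ([] : List A) =
                (some a, (none : Option A)) :: padMap u ([] : List A) from by
              simp [padMap_nil_right]]
            rw [evalFrom_cons, hdead q, slDFA_dead]
          refine ⟨?_, ?_, ?_, ?_⟩ <;> rw [run] <;> simp [slDFA, rk]
      | cons b v =>
          have hpm := padMap_cons_cons a b u v
          have hstepU : (slDFA d).step St.UEND (some a, some b) = St.DEAD := rfl
          have hstepL : (slDFA d).step St.LT (some a, some b) = St.LT := rfl
          have hstepG : (slDFA d).step St.GT (some a, some b) = St.GT := rfl
          have hstepE : (slDFA d).step St.EQ (some a, some b) =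
              (if d a < d b then St.LT else if d b < d a then St.GT else St.EQ) := rfl
          obtain ⟨ih1, ih2, ih3, ih4⟩ := ih v
          refine ⟨?_, ?_, ?_, ?_⟩
          · rw [hpm, evalFrom_cons, hstepU, slDFA_dead]
            simp [slDFA]
          · rw [hpm, evalFrom_cons, hstepL, ih2]
            simp [Nat.succ_le_succ_iff]
          · rw [hpm, evalFrom_cons, hstepG, ih3]
            simp [Nat.succ_lt_succ_iff]
          · rw [hpm, evalFrom_cons, hstepE]
            rcases lt_trichotomy (d a) (d b) with hlt | heq | hgt
            · rw [if_pos hlt, ih2]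
              constructor
              · intro hle
                rcases eq_or_lt_of_le hle with heq' | hlt'
                · exact Rhead heq' hlt
                · exact Rlen (by simpa using Nat.succ_le_of_lt hlt')
              · intro hr
                by_contra hnot
                have hvu : v.length < u.length := Nat.lt_of_not_le hnot
                have : rk k d (b :: v) < rk k d (a :: u) :=
                  Rlen (by simpa using Nat.succ_le_of_lt hvu)
                omega
            · rw [if_neg (by omega), if_neg (by omega), ih4]
              have hab : a = b := hdinj heq
              subst hab
              rcases lt_trichotomy u.length v.length with hl | hl | hl
              · constructor
                · intro _; exact Rlen (by simpa using Nat.succ_le_of_lt hl)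
                · intro _; exact Rlen hl
              · rw [rk_cons (k := k) (d := d) a u, rk_cons (k := k) (d := d) a v, hl]
                omega
              · have h1 : rk k d v < rk k d u := Rlen hl
                have h2 : rk k d (a :: v) < rk k d (a :: u) :=
                  Rlen (by simpa using Nat.succ_le_of_lt hl)
                constructor
                · intro h'; omega
                · intro h'; omega
            · rw [if_neg (by omega), if_pos hgt, ih3]
              constructor
              · intro hl
                exact Rlen (by simpa using Nat.succ_le_of_lt hl)
              · intro hr
                by_contra hnot
                have hvu : v.length ≤ u.length := Nat.le_of_not_lt hnot
                rcases eq_or_lt_of_le hvu with heq' | hlt'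
                · have : rk k d (b :: v) < rk k d (a :: u) := Rhead heq' hgt
                  omega
                · have : rk k d (b :: v) < rk k d (a :: u) :=
                    Rlen (by simpa using Nat.succ_le_of_lt hlt')
                  omega
end SL

/-! ### Projection of a regular language of padded pairs on the second component -/

section Proj
variable {σ : Type}

lemma nfa_mem_evalFrom_iff {β τ : Type*} (N : NFA β τ) (S : Set τ) (w : List β) (s' : τ) :
    s' ∈ N.evalFrom S w ↔ ∃ s ∈ S, s' ∈ N.evalFrom {s} w := by
  induction w generalizing S with
  | nil => simp [NFA.evalFrom]
  | cons a w ih =>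
      show s' ∈ N.evalFrom (N.stepSet S a) w ↔ ∃ s ∈ S, s' ∈ N.evalFrom (N.stepSet {s} a) w
      rw [ih]
      constructor
      · rintro ⟨t, ht, hs'⟩
        rw [NFA.mem_stepSet] at ht
        obtain ⟨s, hs, hts⟩ := ht
        refine ⟨s, hs, ?_⟩
        rw [ih]
        refine ⟨t, ?_, hs'⟩
        rw [NFA.mem_stepSet]
        exact ⟨s, rfl, hts⟩
      · rintro ⟨s, hs, hs'⟩
        rw [ih] at hs'
        obtain ⟨t, ht, hs'⟩ := hs'
        rw [NFA.mem_stepSet] at ht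
        obtain ⟨s₀, hs₀, hts⟩ := ht
        rw [Set.mem_singleton_iff] at hs₀
        rw [hs₀] at hts
        exact ⟨t, by rw [NFA.mem_stepSet]; exact ⟨s, hs, hts⟩, hs'⟩

variable (M : DFA (Option A × Option A) σ)

def projNFA : NFA A (σ × Bool) where
  step s a := match s with
    | (q, true) => {x | (∃ b : A, x = (M.step q (some b, some a), true)) ∨
        x = (M.step q ((none : Option A), some a), false)}
    | (q, false) => {x | x = (M.step q ((none : Option A), some a), false)}
  start := {(M.start, true)}
  accept := {s | (s.2 = true ∧ ∃ t : List A,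
      M.evalFrom s.1 (t.map fun b => (some b, (none : Option A))) ∈ M.accept) ∨
      (s.2 = false ∧ s.1 ∈ M.accept)}

lemma projNFA_falseRun (w : List A) (q : σ) (s : σ × Bool) :
    s ∈ (projNFA M).evalFrom {(q, false)} w ↔
      s = (M.evalFrom q (w.map fun c => ((none : Option A), some c)), false) := by
  induction w generalizing q with
  | nil => simp [NFA.evalFrom]
  | cons a w ih =>
      show s ∈ (projNFA M).evalFrom ((projNFA M).stepSet {(q, false)} a) w ↔ _
      have hstep : (projNFA M).stepSet {(q, false)} a
          = {(M.step q ((none : Option A), some a), false)} := by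
        ext x
        simp [NFA.mem_stepSet, projNFA]
      rw [hstep, ih]
      rfl

lemma projNFA_mem (w : List A) (q : σ) (s : σ × Bool) :
    s ∈ (projNFA M).evalFrom {(q, true)} w ↔
      ((∃ u : List A, u.length = w.length ∧ s = (M.evalFrom q (zipSS u w), true)) ∨
       (∃ u : List A, u.length < w.length ∧ s = (M.evalFrom q (padMap u w), false))) := by
  induction w generalizing q with
  | nil =>
      simp only [NFA.evalFrom, List.foldl_nil, Set.mem_singleton_iff, List.length_nil]
      constructor
      · rintro rfl
        exact Or.inl ⟨[], rfl, rfl⟩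
      · rintro (⟨u, hu, rfl⟩ | ⟨u, hu, _⟩)
        · obtain rfl : u = [] := List.length_eq_zero_iff.mp hu
          rfl
        · omega
  | cons a w ih =>
      show s ∈ (projNFA M).evalFrom ((projNFA M).stepSet {(q, true)} a) w ↔ _
      have hstep : (projNFA M).stepSet {(q, true)} a =
          {x | (∃ b : A, x = (M.step q (some b, some a), true)) ∨
            x = (M.step q ((none : Option A), some a), false)} := by
        ext x
        simp [NFA.mem_stepSet, projNFA]
      rw [hstep, nfa_mem_evalFrom_iff]
      constructor
      · rintro ⟨t, ht, hs⟩
        rcases ht with ⟨b, rfl⟩ | rfl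
        · rw [ih] at hs
          rcases hs with ⟨u, hu, rfl⟩ | ⟨u, hu, rfl⟩
          · exact Or.inl ⟨b :: u, by simp [hu], by rw [zipSS_cons_cons]; rfl⟩
          · exact Or.inr ⟨b :: u, by simp [hu], by rw [padMap_cons_cons]; rfl⟩
        · rw [projNFA_falseRun] at hs
          subst hs
          refine Or.inr ⟨[], by simp, ?_⟩
          rw [padMap_nil_left]
          simp only [List.map_cons]
          rfl
      · rintro (⟨u, hu, rfl⟩ | ⟨u, hu, rfl⟩)
        · cases u with
          | nil => simp at hu
          | cons b u =>
              refine ⟨(M.step q (some b, some a), true), Or.inl ⟨b, rfl⟩, ?_⟩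
              rw [ih]
              exact Or.inl ⟨u, by simpa using hu, by rw [zipSS_cons_cons]; rfl⟩
        · cases u with
          | nil =>
              refine ⟨(M.step q ((none : Option A), some a), false), Or.inr rfl, ?_⟩
              rw [projNFA_falseRun]
              rw [padMap_nil_left]
              simp only [List.map_cons]
              rfl
          | cons b u =>
              refine ⟨(M.step q (some b, some a), true), Or.inl ⟨b, rfl⟩, ?_⟩
              rw [ih]
              exact Or.inr ⟨u, by simpa using hu, by rw [padMap_cons_cons]; rfl⟩

lemma projNFA_accepts (w : List A) :
    w ∈ (projNFA M).accepts ↔ ∃ u : List A, padMap u w ∈ M.accepts := by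
  rw [NFA.mem_accepts]
  constructor
  · rintro ⟨s, hacc, hs⟩
    rw [show (projNFA M).start = {(M.start, true)} from rfl, projNFA_mem] at hs
    rcases hs with ⟨u, hu, rfl⟩ | ⟨u, hu, rfl⟩
    · rcases hacc with ⟨_, t, ht⟩ | ⟨hfalse, _⟩
      · refine ⟨u ++ t, ?_⟩
        rw [DFA.mem_accepts, DFA.eval, padMap_append u t w hu, DFA.evalFrom_of_append]
        exact ht
      · simp at hfalse
    · rcases hacc with ⟨htrue, _⟩ | ⟨_, hq⟩
      · simp at htrue
      · exact ⟨u, hq⟩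
  · rintro ⟨u, hu⟩
    rcases Nat.lt_or_ge u.length w.length with hlt | hge
    · refine ⟨(M.evalFrom M.start (padMap u w), false), Or.inr ⟨rfl, hu⟩, ?_⟩
      rw [show (projNFA M).start = {(M.start, true)} from rfl, projNFA_mem]
      exact Or.inr ⟨u, hlt, rfl⟩
    · set u₁ := u.take w.length with hu₁
      set t := u.drop w.length with ht
      have hlen : u₁.length = w.length := by
        simp [hu₁, List.length_take]
        omega
      have hsplit : u = u₁ ++ t := (List.take_append_drop _ _).symm
      refine ⟨(M.evalFrom M.start (zipSS u₁ w), true), Or.inl ⟨rfl, t, ?_⟩, ?_⟩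
      · rw [← DFA.evalFrom_of_append, ← padMap_append u₁ t w hlen, ← hsplit]
        exact hu
      · rw [show (projNFA M).start = {(M.start, true)} from rfl, projNFA_mem]
        exact Or.inl ⟨u₁, hlen, rfl⟩

lemma isRegular_proj {R : Language (Option A × Option A)} (h : R.IsRegular) :
    Language.IsRegular {w : List A | ∃ u : List A, padMap u w ∈ R} := by
  obtain ⟨σ, _, M, rfl⟩ := h
  haveI : Fintype (Set (σ × Bool)) := Fintype.ofFinite _
  refine ⟨Set (σ × Bool), inferInstance, (projNFA M).toDFA, ?_⟩
  ext w
  rw [show (projNFA M).toDFA.accepts = (projNFA M).accepts from NFA.toDFA_correct]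
  rw [projNFA_accepts]
  rfl

end Proj

end AutoSgProof

open AutoSg in
/-- Any automatic semigroup admits an automatic structure with uniqueness. -/
theorem automatic_structure_with_uniqueness (S : Type*) [Semigroup S]
    (h : IsAutomaticSemigroup S) :
    ∃ (A : Type) (_ : Finite A) (ψ : A → S) (L : Language A),
      IsAutomaticStructureWithUniqueness S ψ L := by
  open AutoSgProof in
  obtain ⟨A, hA, ψ, L, hstr⟩ := h
  haveI := hA
  rcases isEmpty_or_nonempty A with hE | hNE
  · refine ⟨A, hA, ψ, L, ⟨hstr, ?_⟩⟩
    intro u hu v hv _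
    exfalso
    have hne := hstr.nonempty_words u hu
    cases u with
    | nil => exact hne rfl
    | cons a _ => exact hE.false a
  · haveI := Fintype.ofFinite A
    set k := Fintype.card A with hkdef
    have hk : 1 ≤ k := Fintype.card_pos
    set e := Fintype.equivFin A with hedef
    set d : A → ℕ := fun a => (e a).val + 1 with hddef
    have hd1 : ∀ a, 1 ≤ d a := fun a => Nat.succ_le_succ (Nat.zero_le _)
    have hd2 : ∀ a, d a ≤ k := fun a => (e a).isLt
    have hdinj : Function.Injective d := by
      intro a b hab
      apply e.injective
      apply Fin.ext
      simpa [hddef] using hab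
    -- the given equality language
    set EqL : Language (Option A × Option A) :=
      {p | ∃ u ∈ L, ∃ v ∈ L, p = padMap u v ∧ evalWord ψ u = evalWord ψ v} with hEqLdef
    -- the shortlex language
    set SL : Language (Option A × Option A) := (slDFA d).accepts with hSLdef
    have hSL : ∀ u v : List A, padMap u v ∈ SL ↔ rk k d u < rk k d v := fun u v =>
      (slDFA_correct hk hd1 hd2 hdinj u v).2.2.2
    have hSLreg : SL.IsRegular := ⟨St, inferInstance, slDFA d, rfl⟩
    -- the language of non-minimal representatives
    set K : Language A := {w : List A | ∃ u, padMap u w ∈ {p | p ∈ EqL ∧ p ∈ SL}} with hKdef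
    have hKreg : K.IsRegular := isRegular_proj (isRegular_inter hstr.eq_regular hSLreg)
    have hKmem : ∀ w, w ∈ K ↔
        (w ∈ L ∧ ∃ u ∈ L, evalWord ψ u = evalWord ψ w ∧ rk k d u < rk k d w) := by
      intro w
      constructor
      · rintro ⟨u, ⟨u', hu', v', hv', hpm, hev⟩, hsl⟩
        have h1 : u = u' := by
          have := congrArg (List.filterMap Prod.fst) hpm
          rwa [padMap_fst, padMap_fst] at this
        have h2 : w = v' := by
          have := congrArg (List.filterMap Prod.snd) hpm
          rwa [padMap_snd, padMap_snd] at this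
        subst h1
        subst h2
        exact ⟨hv', u, hu', hev, (hSL u w).mp hsl⟩
      · rintro ⟨hw, u, hu, hev, hlt⟩
        exact ⟨u, ⟨u, hu, w, hw, rfl, hev⟩, (hSL u w).mpr hlt⟩
    -- the language of shortlex-minimal representatives
    set L' : Language A := {w | w ∈ L ∧ w ∉ K} with hL'def
    have hL'reg : L'.IsRegular := isRegular_inter hstr.regular (isRegular_compl hKreg)
    have hL'mem : ∀ w, w ∈ L' ↔
        w ∈ L ∧ ∀ u ∈ L, evalWord ψ u = evalWord ψ w → ¬ rk k d u < rk k d w := by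
      intro w
      constructor
      · rintro ⟨hw, hnk⟩
        exact ⟨hw, fun u hu hev hlt => hnk ((hKmem w).mpr ⟨hw, u, hu, hev, hlt⟩)⟩
      · rintro ⟨hw, hmin⟩
        refine ⟨hw, fun hk' => ?_⟩
        obtain ⟨_, u, hu, hev, hlt⟩ := (hKmem w).mp hk'
        exact hmin u hu hev hlt
    have hL'sub : ∀ w ∈ L', w ∈ L := fun w hw => hw.1
    -- padded-pair preimage languages of L'
    have hpre1reg : Language.IsRegular
        {p : List (Option A × Option A) | p.filterMap Prod.fst ∈ L'} :=
      isRegular_filterMap_preimage Prod.fst hL'reg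
    have hpre2reg : Language.IsRegular
        {p : List (Option A × Option A) | p.filterMap Prod.snd ∈ L'} :=
      isRegular_filterMap_preimage Prod.snd hL'reg
    refine ⟨A, hA, ψ, L', ⟨⟨?_, hL'reg, ?_, ?_, ?_⟩, ?_⟩⟩
    · -- nonempty words
      exact fun w hw => hstr.nonempty_words w (hL'sub w hw)
    · -- onto
      intro s
      obtain ⟨w0, hw0, hev0⟩ := hstr.onto s
      set T : Set ℕ := {n | ∃ w ∈ L, evalWord ψ w = some s ∧ rk k d w = n} with hTdef
      have hTne : T.Nonempty := ⟨rk k d w0, w0, hw0, hev0, rfl⟩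
      obtain ⟨w, hw, hev, hrk⟩ := Nat.sInf_mem hTne
      refine ⟨w, ?_, hev⟩
      rw [hL'mem]
      refine ⟨hw, fun u hu hevu hlt => ?_⟩
      have hmemT : rk k d u ∈ T := ⟨u, hu, by rw [hevu, hev], rfl⟩
      have := Nat.sInf_le hmemT
      omega
    · -- eq_regular
      have hres := isRegular_inter (isRegular_inter hstr.eq_regular hpre1reg) hpre2reg
      have hseteq : {p : List (Option A × Option A) |
          ∃ u ∈ L', ∃ v ∈ L', p = padMap u v ∧ evalWord ψ u = evalWord ψ v} =
          {p : List (Option A × Option A) |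
            p ∈ {p : List (Option A × Option A) | p ∈ EqL ∧
              p ∈ {p : List (Option A × Option A) | p.filterMap Prod.fst ∈ L'}} ∧
            p ∈ {p : List (Option A × Option A) | p.filterMap Prod.snd ∈ L'}} := by
        ext p
        constructor
        · rintro ⟨u, hu, v, hv, rfl, hev⟩
          refine ⟨⟨⟨u, hL'sub u hu, v, hL'sub v hv, rfl, hev⟩, ?_⟩, ?_⟩
          · rw [Set.mem_setOf_eq, padMap_fst]; exact hu
          · rw [Set.mem_setOf_eq, padMap_snd]; exact hv
        · rintro ⟨⟨⟨u, hu, v, hv, rfl, hev⟩, h1⟩, h2⟩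
          rw [Set.mem_setOf_eq, padMap_fst] at h1
          rw [Set.mem_setOf_eq, padMap_snd] at h2
          exact ⟨u, h1, v, h2, rfl, hev⟩
      rw [hseteq]
      exact hres
    · -- mul_regular
      intro a
      have hres := isRegular_inter (isRegular_inter (hstr.mul_regular a) hpre1reg) hpre2reg
      have hseteq : {p : List (Option A × Option A) |
          ∃ u ∈ L', ∃ v ∈ L', p = padMap u v ∧ evalWord ψ (u ++ [a]) = evalWord ψ v} =
          {p : List (Option A × Option A) |
            p ∈ {p : List (Option A × Option A) |
              p ∈ {p : List (Option A × Option A) |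
                ∃ u ∈ L, ∃ v ∈ L, p = padMap u v ∧ evalWord ψ (u ++ [a]) = evalWord ψ v} ∧
              p ∈ {p : List (Option A × Option A) | p.filterMap Prod.fst ∈ L'}} ∧
            p ∈ {p : List (Option A × Option A) | p.filterMap Prod.snd ∈ L'}} := by
        ext p
        constructor
        · rintro ⟨u, hu, v, hv, rfl, hev⟩
          refine ⟨⟨⟨u, hL'sub u hu, v, hL'sub v hv, rfl, hev⟩, ?_⟩, ?_⟩
          · rw [Set.mem_setOf_eq, padMap_fst]; exact hu
          · rw [Set.mem_setOf_eq, padMap_snd]; exact hv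
        · rintro ⟨⟨⟨u, hu, v, hv, rfl, hev⟩, h1⟩, h2⟩
          rw [Set.mem_setOf_eq, padMap_fst] at h1
          rw [Set.mem_setOf_eq, padMap_snd] at h2
          exact ⟨u, h1, v, h2, rfl, hev⟩
      rw [hseteq]
      exact hres
    · -- uniqueness
      intro u hu v hv hev
      by_contra hne
      have h1 := (hL'mem u).mp hu
      have h2 := (hL'mem v).mp hv
      have hrkne : rk k d u ≠ rk k d v :=
        fun hEq => hne (rk_injective hk hd1 hd2 hdinj hEq)
      rcases Nat.lt_or_ge (rk k d u) (rk k d v) with hlt | hge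
      · exact h2.2 u h1.1 hev hlt
      · have hlt : rk k d v < rk k d u := lt_of_le_of_ne hge (fun e' => hrkne e'.symm)
        exact h1.2 v h2.1 hev.symm hlt
end

section
/- Let S be a finite semigroup and T an infinite automatic semigroup. Then S × T is automatic if and only if S² = S. -/
namespace AutoSgAux

open AutoSg

/-! ### Generalities about `evalWord` -/

theorem foldl_mul_assoc {S : Type*} [Semigroup S] (l : List S) (x y : S) :
    l.foldl (· * ·) (x * y) = x * l.foldl (· * ·) y := by
  induction l generalizing y with
  | nil => rfl
  | cons a l ih =>
    simp only [List.foldl_cons]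
    rw [mul_assoc]
    exact ih (y * a)

theorem evalWord_cons {S A : Type*} [Semigroup S] (ψ : A → S) (a b : A) (r : List A) :
    evalWord ψ (a :: b :: r) = (evalWord ψ (b :: r)).map (fun x => ψ a * x) := by
  simp [evalWord, foldl_mul_assoc]

theorem evalWord_ne_nil {S A : Type*} [Semigroup S] (ψ : A → S) {w : List A} (h : w ≠ []) :
    ∃ x, evalWord ψ w = some x := by
  cases w with
  | nil => exact absurd rfl h
  | cons a r => exact ⟨_, rfl⟩

theorem evalWord_concat {S A : Type*} [Semigroup S] (ψ : A → S) (u : List A) (x : A) :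
    evalWord ψ (u ++ [x]) = some ((evalWord ψ u).elim (ψ x) (· * ψ x)) := by
  cases u with
  | nil => simp [evalWord]
  | cons a r => simp [evalWord, List.foldl_append]

theorem evalWord_concat_of_some {S A : Type*} [Semigroup S] (ψ : A → S) {u : List A} {x : A}
    {s : S} (h : evalWord ψ u = some s) : evalWord ψ (u ++ [x]) = some (s * ψ x) := by
  rw [evalWord_concat, h]
  rfl

theorem evalWord_comp {S A B : Type*} [Semigroup S] (ψ : A → S) (f : B → A) (w : List B) :
    evalWord (fun b => ψ (f b)) w = evalWord ψ (w.map f) := by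
  cases w with
  | nil => rfl
  | cons a r => simp [evalWord, List.map_map, Function.comp_def]

theorem foldl_prod {U V : Type*} [Semigroup U] [Semigroup V] :
    ∀ (l : List (U × V)) (x : U × V),
      l.foldl (· * ·) x = ((l.map Prod.fst).foldl (· * ·) x.1, (l.map Prod.snd).foldl (· * ·) x.2)
  | [], x => rfl
  | a :: l, x => by
    simp only [List.foldl_cons, List.map_cons]
    rw [foldl_prod l (x * a)]
    rfl

theorem evalWord_pair {U V B : Type*} [Semigroup U] [Semigroup V] (g : B → U × V) (w : List B) :
    evalWord g w
      = Option.map₂ Prod.mk (evalWord (fun b => (g b).1) w) (evalWord (fun b => (g b).2) w) := by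
  cases w with
  | nil => rfl
  | cons a r =>
    simp only [evalWord, foldl_prod (r.map g) (g a), List.map_map]
    rfl

/-- If `S² = S`, every element is a product of any prescribed positive number of factors. -/
theorem exists_evalWord_id {S : Type*} [Semigroup S] (hS : ∀ s : S, ∃ a b : S, s = a * b) :
    ∀ (k : ℕ) (s : S), ∃ l : List S, l.length = k + 1 ∧ evalWord (fun x => x) l = some s := by
  intro k
  induction k with
  | zero => intro s; exact ⟨[s], rfl, rfl⟩
  | succ k ih =>
    intro s
    obtain ⟨a, b, hab⟩ := hS s
    obtain ⟨l, hl, he⟩ := ih b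
    refine ⟨a :: l, by simp [hl], ?_⟩
    cases l with
    | nil => simp at hl
    | cons c r =>
      rw [evalWord_cons, he]
      simp [hab]

/-! ### Generalities about `padMap` -/

@[simp] theorem padMap_nil_nil {A : Type*} : padMap ([] : List A) [] = [] := rfl

@[simp] theorem padMap_cons_cons {A : Type*} (a b : A) (u v : List A) :
    padMap (a :: u) (b :: v) = (some a, some b) :: padMap u v := by
  simp [padMap]

@[simp] theorem padMap_nil_cons {A : Type*} (b : A) (v : List A) :
    padMap ([] : List A) (b :: v) = (none, some b) :: padMap [] v := by
  simp [padMap, List.replicate_succ]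

@[simp] theorem padMap_cons_nil {A : Type*} (a : A) (u : List A) :
    padMap (a :: u) ([] : List A) = (some a, none) :: padMap u [] := by
  simp [padMap, List.replicate_succ]

theorem padMap_eq_nil {A : Type*} {u v : List A} (h : padMap u v = []) : u = [] ∧ v = [] := by
  cases u <;> cases v <;> simp_all

theorem padMap_map {B A : Type*} (f : B → A) (u v : List B) :
    (padMap u v).map (fun x => (x.1.map f, x.2.map f)) = padMap (u.map f) (v.map f) := by
  induction u generalizing v with
  | nil =>
    induction v with
    | nil => rfl
    | cons b v ihv => simpa using ihv
  | cons a u ih =>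
    cases v with
    | nil => simpa using ih []
    | cons b v => simpa using ih v

theorem padMap_shape {B A : Type*} (f : B → A) :
    ∀ (p : List (Option B × Option B)) (u₀ v₀ : List A),
      p.map (fun x => (x.1.map f, x.2.map f)) = padMap u₀ v₀ →
      ∃ u v, p = padMap u v ∧ u.map f = u₀ ∧ v.map f = v₀ := by
  intro p
  induction p with
  | nil =>
    intro u₀ v₀ h
    obtain ⟨hu, hv⟩ := padMap_eq_nil (u := u₀) (v := v₀) h.symm
    exact ⟨[], [], by simp [hu, hv]⟩
  | cons x p ih =>
    intro u₀ v₀ h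
    match u₀, v₀ with
    | [], [] => simp at h
    | a :: u₀, b :: v₀ =>
      simp only [List.map_cons, padMap_cons_cons, List.cons.injEq, Prod.mk.injEq] at h
      obtain ⟨⟨h1, h2⟩, h3⟩ := h
      obtain ⟨xa, hxa, rfl⟩ := Option.map_eq_some_iff.mp h1
      obtain ⟨yb, hyb, rfl⟩ := Option.map_eq_some_iff.mp h2
      obtain ⟨u, v, rfl, hu, hv⟩ := ih u₀ v₀ h3
      exact ⟨xa :: u, yb :: v, by simp [← hxa, ← hyb, Prod.ext_iff, hu, hv]⟩
    | a :: u₀, [] =>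
      simp only [List.map_cons, padMap_cons_nil, List.cons.injEq, Prod.mk.injEq] at h
      obtain ⟨⟨h1, h2⟩, h3⟩ := h
      obtain ⟨xa, hxa, rfl⟩ := Option.map_eq_some_iff.mp h1
      have h2' : x.2 = none := Option.map_eq_none_iff.mp h2
      obtain ⟨u, v, rfl, hu, hv⟩ := ih u₀ [] h3
      have hv' : v = [] := List.map_eq_nil_iff.mp hv
      subst hv'
      exact ⟨xa :: u, [], by simp [← hxa, h2', Prod.ext_iff, hu]⟩
    | [], b :: v₀ =>
      simp only [List.map_cons, padMap_nil_cons, List.cons.injEq, Prod.mk.injEq] at h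
      obtain ⟨⟨h1, h2⟩, h3⟩ := h
      obtain ⟨yb, hyb, rfl⟩ := Option.map_eq_some_iff.mp h2
      have h1' : x.1 = none := Option.map_eq_none_iff.mp h1
      obtain ⟨u, v, rfl, hu, hv⟩ := ih [] v₀ h3
      have hu' : u = [] := List.map_eq_nil_iff.mp hu
      subst hu'
      exact ⟨[], yb :: v, by simp [← hyb, h1', Prod.ext_iff, hv]⟩

/-! ### DFA constructions -/

theorem accepts_isRegular {α : Type*} {σ : Type*} [Finite σ] (M : DFA α σ) :
    M.accepts.IsRegular := by
  obtain ⟨m, ⟨g⟩⟩ := Finite.exists_equiv_fin σ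
  exact ⟨Fin m, inferInstance, DFA.reindex g M, by simp⟩

variable {S : Type*} [Semigroup S] {B : Type*} (φ : B → S)

/-- Update an optional running product by an optional letter. -/
def upd : Option S → Option B → Option S
  | c, none => c
  | c, some b => some (c.elim (φ b) (· * φ b))

@[simp] theorem upd_none (c : Option S) : upd φ c none = c := rfl
@[simp] theorem upd_some (c : Option S) (b : B) :
    upd φ c (some b) = some (c.elim (φ b) (· * φ b)) := rfl

theorem foldl_upd_some : ∀ (w : List B) (x : S),
    List.foldl (fun c b => upd φ c (some b)) (some x) w = some ((w.map φ).foldl (· * ·) x)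
  | [], x => rfl
  | b :: w, x => by
    simp only [List.foldl_cons, upd_some, Option.elim, List.map_cons]
    exact foldl_upd_some w (x * φ b)

theorem foldl_upd_eval (w : List B) :
    List.foldl (fun c b => upd φ c (some b)) none w = evalWord φ w := by
  cases w with
  | nil => rfl
  | cons b w =>
    simp only [List.foldl_cons, upd_some, Option.elim]
    exact foldl_upd_some φ w (φ b)

variable {A : Type*} (f : B → A) {σ : Type*} (N : DFA (Option A × Option A) σ)
  (acc : Set (Option S × Option S))

/-- Product machine: tracks both running products in `S` and simultaneously runs `N`
over the `f`-projected letters. -/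
def pairDFA : DFA (Option B × Option B) ((Option S × Option S) × σ) where
  step := fun q x => ((upd φ q.1.1 x.1, upd φ q.1.2 x.2), N.step q.2 (x.1.map f, x.2.map f))
  start := ((none, none), N.start)
  accept := {q | q.1 ∈ acc ∧ q.2 ∈ N.accept}

theorem pairDFA_evalFrom :
    ∀ (p : List (Option B × Option B)) (c d : Option S) (q : σ),
      (pairDFA φ f N acc).evalFrom ((c, d), q) p
        = ((List.foldl (upd φ) c (p.map Prod.fst), List.foldl (upd φ) d (p.map Prod.snd)),
            N.evalFrom q (p.map (fun x => (x.1.map f, x.2.map f))))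
  | [], c, d, q => rfl
  | x :: p, c, d, q => by
    simp only [DFA.evalFrom, List.foldl_cons, List.map_cons]
    exact pairDFA_evalFrom p _ _ _

theorem foldl_upd_padMap_fst :
    ∀ (u v : List B) (c : Option S),
      List.foldl (upd φ) c ((padMap u v).map Prod.fst)
        = List.foldl (fun c b => upd φ c (some b)) c u := by
  intro u
  induction u with
  | nil =>
    intro v
    induction v with
    | nil => intro c; rfl
    | cons b v ihv => intro c; simpa using ihv c
  | cons a u ih =>
    intro v c
    cases v with
    | nil => simpa using ih [] _
    | cons b v => simpa using ih v _

theorem foldl_upd_padMap_snd :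
    ∀ (u v : List B) (d : Option S),
      List.foldl (upd φ) d ((padMap u v).map Prod.snd)
        = List.foldl (fun c b => upd φ c (some b)) d v := by
  intro u
  induction u with
  | nil =>
    intro v
    induction v with
    | nil => intro d; rfl
    | cons b v ihv => intro d; simpa using ihv _
  | cons a u ih =>
    intro v d
    cases v with
    | nil =>
      simp only [padMap_cons_nil, List.map_cons, List.foldl_cons, upd_none]
      simpa using ih [] d
    | cons b v => simpa using ih v _

theorem pairDFA_eval_padMap (u v : List B) :
    (pairDFA φ f N acc).eval (padMap u v)
      = ((evalWord φ u, evalWord φ v), N.eval (padMap (u.map f) (v.map f))) := by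
  show (pairDFA φ f N acc).evalFrom ((none, none), N.start) _ = _
  rw [pairDFA_evalFrom, foldl_upd_padMap_fst, foldl_upd_padMap_snd, foldl_upd_eval,
    foldl_upd_eval, padMap_map]
  rfl

theorem pairDFA_eval_pi (p : List (Option B × Option B)) :
    ((pairDFA φ f N acc).eval p).2 = N.eval (p.map (fun x => (x.1.map f, x.2.map f))) := by
  show ((pairDFA φ f N acc).evalFrom ((none, none), N.start) p).2 = _
  rw [pairDFA_evalFrom]; rfl

end AutoSgAux

open AutoSg AutoSgAux in
/-- For a finite semigroup `S` and an infinite automatic semigroup `T`, the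
direct product `S × T` is automatic iff `S² = S`. -/
theorem prod_automatic_iff_of_finite_left (S T : Type*) [Semigroup S] [Semigroup T]
    [Finite S] [Infinite T] (hT : IsAutomaticSemigroup T) :
    IsAutomaticSemigroup (S × T) ↔ (∀ s : S, ∃ a b : S, s = a * b) := by
  constructor
  · -- If `S × T` is automatic then `S² = S`.
    rintro ⟨A, hA, ψ, L, h⟩ s
    haveI := hA
    choose w hwL hwe using fun t : T => h.onto (s, t)
    have hinj : Function.Injective w := by
      intro t₁ t₂ hw
      have h1 : evalWord ψ (w t₂) = some (s, t₁) := by rw [← hw]; exact hwe t₁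
      have h2 := hwe t₂
      rw [h1] at h2
      simpa using h2
    have hbig : ∃ t, 2 ≤ (w t).length := by
      by_contra hcon
      push_neg at hcon
      have hfin : (Set.range w).Finite := (List.finite_length_le A 1).subset
        (by rintro _ ⟨t, rfl⟩; simpa [Nat.lt_succ_iff] using hcon t)
      exact Set.infinite_range_of_injective hinj hfin
    obtain ⟨t, ht⟩ := hbig
    rcases hwt : w t with _ | ⟨a, _ | ⟨b, r⟩⟩
    · rw [hwt] at ht; simp at ht
    · rw [hwt] at ht; simp at ht
    · have he := hwe t
      rw [hwt, evalWord_cons] at he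
      obtain ⟨x, hx⟩ := evalWord_ne_nil ψ (by simp : (b :: r : List A) ≠ [])
      rw [hx] at he
      simp only [Option.map_some] at he
      have h' : ψ a * x = (s, t) := Option.some.inj he
      exact ⟨(ψ a).1, x.1, (congrArg Prod.fst h').symm⟩
  · -- If `S² = S` then `S × T` is automatic.
    intro hS
    obtain ⟨A, hA, ψ, L, hL⟩ := hT
    haveI := hA
    obtain ⟨n, ⟨e⟩⟩ := Finite.exists_equiv_fin S
    haveI := Fintype.ofFinite S
    refine ⟨Fin n × A, inferInstance, fun b => (e.symm b.1, ψ b.2),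
      {w : List (Fin n × A) | w.map Prod.snd ∈ L}, ?_⟩
    set ψW : Fin n × A → S × T := fun b => (e.symm b.1, ψ b.2) with hψW
    set φ : Fin n × A → S := fun b => e.symm b.1 with hφ
    have hpair : ∀ w : List (Fin n × A),
        evalWord ψW w = Option.map₂ Prod.mk (evalWord φ w) (evalWord ψ (w.map Prod.snd)) := by
      intro w
      refine (evalWord_pair ψW w).trans ?_
      rw [← evalWord_comp ψ Prod.snd w]
    have hne : ∀ {u : List (Fin n × A)}, u.map Prod.snd ∈ L → u ≠ [] := by
      intro u hu h
      exact hL.nonempty_words (u.map Prod.snd) hu (by rw [h]; rfl)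
    constructor
    · -- nonempty words
      intro w hw h
      exact hne hw h
    · -- regularity of the language
      obtain ⟨σ, fσ, M, hM⟩ := hL.regular
      exact ⟨σ, fσ, M.comap Prod.snd, by rw [DFA.accepts_comap, hM]; rfl⟩
    · -- representability
      rintro ⟨s, t⟩
      obtain ⟨w, hwL, hwt⟩ := hL.onto t
      have hw : w ≠ [] := hL.nonempty_words w hwL
      obtain ⟨l, hl, hle⟩ := exists_evalWord_id hS (w.length - 1) s
      have hwpos : 0 < w.length := List.length_pos_iff.mpr hw
      have hll : l.length = w.length := by omega
      have hfst : ((l.map e).zip w).map Prod.fst = l.map e :=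
        List.map_fst_zip (by simp [hll])
      have hsnd : ((l.map e).zip w).map Prod.snd = w :=
        List.map_snd_zip (by simp [hll])
      refine ⟨(l.map e).zip w, ?_, ?_⟩
      · show ((l.map e).zip w).map Prod.snd ∈ L
        rw [hsnd]; exact hwL
      · have hφ1 : evalWord φ ((l.map e).zip w) = some s := by
          calc evalWord φ ((l.map e).zip w)
              = evalWord (⇑e.symm) (((l.map e).zip w).map Prod.fst) := by
                rw [hφ]; exact evalWord_comp _ Prod.fst _
            _ = evalWord (⇑e.symm) (l.map ⇑e) := by rw [hfst]
            _ = evalWord (fun x => e.symm (e x)) l := (evalWord_comp (⇑e.symm) (⇑e) l).symm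
            _ = evalWord (fun x => x) l := by simp only [Equiv.symm_apply_apply]
            _ = some s := hle
        rw [hpair, hsnd, hwt, hφ1]
        rfl
    · -- equality relation is regular
      obtain ⟨σ, fσ, N, hN⟩ := hL.eq_regular
      haveI := fσ
      refine (iff_of_eq (congrArg Language.IsRegular ?_)).mpr (accepts_isRegular
        (pairDFA φ Prod.snd N {z : Option S × Option S | z.1 = z.2}))
      ext p
      constructor
      · rintro ⟨u, hu, v, hv, rfl, heq⟩
        have hu' : u ≠ [] := hne hu
        have hv' : v ≠ [] := hne hv
        obtain ⟨s₁, hs₁⟩ := evalWord_ne_nil φ hu'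
        obtain ⟨s₂, hs₂⟩ := evalWord_ne_nil φ hv'
        obtain ⟨t₁, ht₁⟩ := evalWord_ne_nil ψ (w := u.map Prod.snd) (by simpa using hu')
        obtain ⟨t₂, ht₂⟩ := evalWord_ne_nil ψ (w := v.map Prod.snd) (by simpa using hv')
        rw [hpair u, hpair v, hs₁, hs₂, ht₁, ht₂] at heq
        simp only [Option.map₂_some_some, Option.some.injEq, Prod.mk.injEq] at heq
        rw [DFA.mem_accepts, pairDFA_eval_padMap]
        refine ⟨?_, ?_⟩
        · show evalWord φ u = evalWord φ v
          rw [hs₁, hs₂, heq.1]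
        · show N.eval _ ∈ N.accept
          rw [← DFA.mem_accepts, hN]
          exact ⟨u.map Prod.snd, hu, v.map Prod.snd, hv, rfl, by rw [ht₁, ht₂, heq.2]⟩
      · intro hp
        rw [DFA.mem_accepts] at hp
        have h1 := hp.1
        have h2' : p.map (fun x => (x.1.map Prod.snd, x.2.map Prod.snd)) ∈ N.accepts := by
          rw [DFA.mem_accepts,
            ← pairDFA_eval_pi φ Prod.snd N {z : Option S × Option S | z.1 = z.2} p]
          exact hp.2
        rw [hN] at h2'
        obtain ⟨u₀, hu₀, v₀, hv₀, hpm, hTeq⟩ := h2'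
        obtain ⟨u, v, rfl, hum, hvm⟩ := padMap_shape Prod.snd p u₀ v₀ hpm
        subst hum; subst hvm
        have hA1 : evalWord φ u = evalWord φ v := by
          have := h1
          rw [pairDFA_eval_padMap] at this
          exact this
        refine ⟨u, hu₀, v, hv₀, rfl, ?_⟩
        rw [hpair u, hpair v, hA1, hTeq]
    · -- multiplication relations are regular
      intro b₀
      obtain ⟨σ, fσ, N, hN⟩ := hL.mul_regular b₀.2
      haveI := fσ
      refine (iff_of_eq (congrArg Language.IsRegular ?_)).mpr (accepts_isRegular (pairDFA φ Prod.snd N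
        {z : Option S × Option S | ∃ s, z.1 = some s ∧ z.2 = some (s * φ b₀)}))
      ext p
      constructor
      · rintro ⟨u, hu, v, hv, rfl, heq⟩
        have hu' : u ≠ [] := hne hu
        have hv' : v ≠ [] := hne hv
        obtain ⟨s₁, hs₁⟩ := evalWord_ne_nil φ hu'
        obtain ⟨s₂, hs₂⟩ := evalWord_ne_nil φ hv'
        obtain ⟨t₁, ht₁⟩ := evalWord_ne_nil ψ (w := u.map Prod.snd) (by simpa using hu')
        obtain ⟨t₂, ht₂⟩ := evalWord_ne_nil ψ (w := v.map Prod.snd) (by simpa using hv')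
        rw [hpair (u ++ [b₀]), hpair v, hs₂, ht₂,
          evalWord_concat_of_some φ hs₁] at heq
        simp only [List.map_append, List.map_cons, List.map_nil] at heq
        rw [evalWord_concat_of_some ψ ht₁] at heq
        simp only [Option.map₂_some_some, Option.some.injEq, Prod.mk.injEq] at heq
        rw [DFA.mem_accepts, pairDFA_eval_padMap]
        refine ⟨?_, ?_⟩
        · exact ⟨s₁, by rw [hs₁], by rw [hs₂, heq.1]⟩
        · show N.eval _ ∈ N.accept
          rw [← DFA.mem_accepts, hN]
          refine ⟨u.map Prod.snd, hu, v.map Prod.snd, hv, rfl, ?_⟩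
          rw [evalWord_concat_of_some ψ ht₁, ht₂, heq.2]
      · intro hp
        rw [DFA.mem_accepts] at hp
        have h1 := hp.1
        have h2' : p.map (fun x => (x.1.map Prod.snd, x.2.map Prod.snd)) ∈ N.accepts := by
          rw [DFA.mem_accepts, ← pairDFA_eval_pi φ Prod.snd N
            {z : Option S × Option S | ∃ s, z.1 = some s ∧ z.2 = some (s * φ b₀)} p]
          exact hp.2
        rw [hN] at h2'
        obtain ⟨u₀, hu₀, v₀, hv₀, hpm, hTeq⟩ := h2'
        obtain ⟨u, v, rfl, hum, hvm⟩ := padMap_shape Prod.snd p u₀ v₀ hpm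
        subst hum; subst hvm
        obtain ⟨s, hz1, hz2⟩ : ∃ s, evalWord φ u = some s ∧ evalWord φ v = some (s * φ b₀) := by
          have := h1
          rw [pairDFA_eval_padMap] at this
          exact this
        refine ⟨u, hu₀, v, hv₀, rfl, ?_⟩
        rw [hpair (u ++ [b₀]), hpair v, evalWord_concat_of_some φ hz1, hz2]
        simp only [List.map_append, List.map_cons, List.map_nil]
        rw [hTeq]
end

section
/- Let S = M[U; I, J; P] be a Rees matrix semigroup such that there is an entry p of P with pU¹ = U (where U¹ is U with identity adjoined). If S is automatic then U is automatic. -/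
namespace AutoSg

/-- The Rees matrix semigroup `M[U; I, J; P]` over a semigroup `U` with sandwich
matrix `P : J × I → U`: underlying set `I × U × J` with multiplication
`(l₁,s₁,r₁)(l₂,s₂,r₂) = (l₁, s₁ p_{r₁ l₂} s₂, r₂)`. -/
def ReesMatrix (U I J : Type*) (_P : J → I → U) := I × U × J

instance {U I J : Type*} [Semigroup U] (P : J → I → U) : Mul (ReesMatrix U I J P) :=
  ⟨fun x y => ((x.1, x.2.1 * P x.2.2 y.1 * y.2.1, y.2.2) : I × U × J)⟩

theorem ReesMatrix.mul_def {U I J : Type*} [Semigroup U] {P : J → I → U}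
    (x y : ReesMatrix U I J P) :
    x * y = ((x.1, x.2.1 * P x.2.2 y.1 * y.2.1, y.2.2) : I × U × J) := rfl

instance {U I J : Type*} [Semigroup U] (P : J → I → U) : Semigroup (ReesMatrix U I J P) where
  mul_assoc x y z := by
    rcases x with ⟨a, b, c⟩
    rcases y with ⟨d, e, f⟩
    rcases z with ⟨g, h, k⟩
    show ((a, b * P c d * e * P f g * h, k) : I × U × J) = (a, b * P c d * (e * P f g * h), k)
    simp only [mul_assoc]


/-- A semigroup is finitely generated if a finite subset generates it. -/
def SemigroupFG (S : Type*) [Semigroup S] : Prop :=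
  ∃ U : Finset S, Subsemigroup.closure (U : Set S) = ⊤

/-- `(A, L)` is a prefix-automatic structure for `S`: an automatic structure such
that the relation `{(w₁, w₂) : w₁ ∈ L, w₂ ∈ Pref(L), w₁ = w₂}` is also regular. -/
structure IsPrefixAutomaticStructure (S : Type*) [Semigroup S] {A : Type*} [Finite A]
    (ψ : A → S) (L : Language A) extends IsAutomaticStructure S ψ L : Prop where
  prefix_regular : Language.IsRegular
    {p : List (Option A × Option A) |
      ∃ u ∈ L, ∃ v : List A, v ≠ [] ∧ (∃ w, v ++ w ∈ L) ∧
        p = padMap u v ∧ evalWord ψ u = evalWord ψ v}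

/-- A semigroup is prefix-automatic if it admits a prefix-automatic structure. -/
def IsPrefixAutomaticSemigroup (S : Type*) [Semigroup S] : Prop :=
  ∃ (A : Type) (_ : Finite A) (ψ : A → S) (L : Language A), IsPrefixAutomaticStructure S ψ L

end AutoSg


namespace ASP
open AutoSg
open scoped Classical

variable {A : Type}
open AutoSg

open scoped Classical


/-! ### padMap basics -/

theorem padMap_nil_nil : padMap ([] : List A) [] = [] := rfl

theorem padMap_cons_cons (a b : A) (u v : List A) :
    padMap (a :: u) (b :: v) = (some a, some b) :: padMap u v := by
  simp [padMap, List.zipWith]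

theorem padMap_nil_cons (b : A) (v : List A) :
    padMap ([] : List A) (b :: v) = (none, some b) :: padMap [] v := by
  simp [padMap, List.replicate_succ, List.zipWith]

theorem padMap_cons_nil (a : A) (u : List A) :
    padMap (a :: u) ([] : List A) = (some a, none) :: padMap u [] := by
  simp [padMap, List.replicate_succ, List.zipWith]

theorem padMap_nil_right (u : List A) :
    padMap u [] = u.map (fun a => (some a, none)) := by
  induction u with
  | nil => rfl
  | cons a u ih => rw [padMap_cons_nil, ih]; rfl

theorem padMap_nil_left (v : List A) :
    padMap [] v = v.map (fun b => ((none : Option A), some b)) := by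
  induction v with
  | nil => rfl
  | cons b v ih => rw [padMap_nil_cons, ih]; rfl

/-- Extract first track. -/
def tr1 {A : Type*} (q : List (Option A × Option A)) : List A :=
  (q.map Prod.fst).reduceOption

def tr2 {A : Type*} (q : List (Option A × Option A)) : List A :=
  (q.map Prod.snd).reduceOption

theorem tr1_padMap (u v : List A) : tr1 (padMap u v) = u := by
  induction u generalizing v with
  | nil =>
    rw [padMap_nil_left]
    induction v with
    | nil => rfl
    | cons b v ih => rw [List.map_cons]; simpa [tr1] using ih
  | cons a u ih =>
    cases v with
    | nil =>
      rw [padMap_cons_nil]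
      have : tr1 (padMap u ([] : List A)) = u := ih []
      simpa [tr1] using this
    | cons b v =>
      rw [padMap_cons_cons]
      have := ih v
      simpa [tr1] using this

theorem tr2_padMap (u v : List A) : tr2 (padMap u v) = v := by
  induction u generalizing v with
  | nil =>
    rw [padMap_nil_left]
    induction v with
    | nil => rfl
    | cons b v ih => rw [List.map_cons]; simpa [tr2] using ih
  | cons a u ih =>
    cases v with
    | nil =>
      rw [padMap_cons_nil]
      have : tr2 (padMap u ([] : List A)) = [] := ih []
      simpa [tr2] using this
    | cons b v =>
      rw [padMap_cons_cons]
      have := ih v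
      simpa [tr2] using this

theorem padMap_inj {u v u' v' : List A} (h : padMap u v = padMap u' v') :
    u = u' ∧ v = v' := by
  constructor
  · rw [← tr1_padMap u v, h, tr1_padMap]
  · rw [← tr2_padMap u v, h, tr2_padMap]

theorem map_swap_padMap (u v : List A) :
    (padMap u v).map Prod.swap = padMap v u := by
  induction u generalizing v with
  | nil =>
    induction v with
    | nil => rfl
    | cons b v ih => rw [padMap_nil_cons, padMap_cons_nil, List.map_cons, ih]; rfl
  | cons a u ih =>
    cases v with
    | nil =>
      rw [padMap_cons_nil, padMap_nil_cons, List.map_cons]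
      have := ih []
      rw [this]; rfl
    | cons b v =>
      rw [padMap_cons_cons, padMap_cons_cons, List.map_cons, ih]; rfl

/-- The padded language of a binary relation on words. -/
def PadL (R : List A → List A → Prop) : Language (Option A × Option A) :=
  {q | ∃ u v, R u v ∧ q = padMap u v}

theorem mem_PadL {R : List A → List A → Prop} {q} :
    q ∈ PadL R ↔ ∃ u v, R u v ∧ q = padMap u v := Iff.rfl

theorem padMap_mem_PadL {R : List A → List A → Prop} {u v} :
    padMap u v ∈ PadL R ↔ R u v := by
  constructor
  · rintro ⟨u', v', h, he⟩
    obtain ⟨h1, h2⟩ := padMap_inj he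
    rwa [h1, h2]
  · intro h; exact ⟨u, v, h, rfl⟩

theorem PadL_congr {R R' : List A → List A → Prop} (h : ∀ u v, R u v ↔ R' u v) :
    PadL R = PadL R' := by
  ext q
  constructor
  · rintro ⟨u, v, hr, rfl⟩; exact ⟨u, v, (h u v).mp hr, rfl⟩
  · rintro ⟨u, v, hr, rfl⟩; exact ⟨u, v, (h u v).mpr hr, rfl⟩

theorem PadL_inter (R R' : List A → List A → Prop) :
    PadL (fun u v => R u v ∧ R' u v) = {q | q ∈ PadL R ∧ q ∈ PadL R'} := by
  ext q
  constructor
  · rintro ⟨u, v, ⟨h1, h2⟩, rfl⟩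
    exact ⟨⟨u, v, h1, rfl⟩, ⟨u, v, h2, rfl⟩⟩
  · rintro ⟨⟨u, v, h1, rfl⟩, ⟨u', v', h2, he⟩⟩
    obtain ⟨e1, e2⟩ := padMap_inj he
    exact ⟨u, v, ⟨h1, by rwa [e1, e2]⟩, rfl⟩

theorem PadL_union (R R' : List A → List A → Prop) :
    PadL (fun u v => R u v ∨ R' u v) = {q | q ∈ PadL R ∨ q ∈ PadL R'} := by
  ext q
  constructor
  · rintro ⟨u, v, h1 | h2, rfl⟩
    · exact Or.inl ⟨u, v, h1, rfl⟩
    · exact Or.inr ⟨u, v, h2, rfl⟩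
  · rintro (⟨u, v, h, rfl⟩ | ⟨u, v, h, rfl⟩)
    · exact ⟨u, v, Or.inl h, rfl⟩
    · exact ⟨u, v, Or.inr h, rfl⟩

section Generic
variable {α : Type}
open scoped Classical

variable {α : Type}

/-! ### generic regularity combinators -/

def prodDFA (D1 : DFA α σ1) (D2 : DFA α σ2) (acc : Set (σ1 × σ2)) : DFA α (σ1 × σ2) where
  step := fun p a => (D1.step p.1 a, D2.step p.2 a)
  start := (D1.start, D2.start)
  accept := acc

theorem prodDFA_evalFrom (D1 : DFA α σ1) (D2 : DFA α σ2) (acc : Set (σ1 × σ2))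
    (s : σ1) (t : σ2) (x : List α) :
    (prodDFA D1 D2 acc).evalFrom (s, t) x = (D1.evalFrom s x, D2.evalFrom t x) := by
  induction x generalizing s t with
  | nil => rfl
  | cons a x ih => exact ih (D1.step s a) (D2.step t a)

theorem isRegular_inter {L M : Language α} (hL : L.IsRegular) (hM : M.IsRegular) :
    Language.IsRegular {x | x ∈ L ∧ x ∈ M} := by
  obtain ⟨σ1, _, D1, rfl⟩ := hL
  obtain ⟨σ2, _, D2, rfl⟩ := hM
  refine ⟨σ1 × σ2, inferInstance,
    prodDFA D1 D2 {p | p.1 ∈ D1.accept ∧ p.2 ∈ D2.accept}, ?_⟩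
  ext x
  rw [DFA.mem_accepts]
  show (prodDFA D1 D2 _).evalFrom (D1.start, D2.start) x ∈ _ ↔ _
  rw [prodDFA_evalFrom]
  exact Iff.rfl

theorem isRegular_union {L M : Language α} (hL : L.IsRegular) (hM : M.IsRegular) :
    Language.IsRegular {x | x ∈ L ∨ x ∈ M} := by
  obtain ⟨σ1, _, D1, rfl⟩ := hL
  obtain ⟨σ2, _, D2, rfl⟩ := hM
  refine ⟨σ1 × σ2, inferInstance,
    prodDFA D1 D2 {p | p.1 ∈ D1.accept ∨ p.2 ∈ D2.accept}, ?_⟩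
  ext x
  rw [DFA.mem_accepts]
  show (prodDFA D1 D2 _).evalFrom (D1.start, D2.start) x ∈ _ ↔ _
  rw [prodDFA_evalFrom]
  exact Iff.rfl

theorem isRegular_empty : Language.IsRegular {x : List α | False} :=
  ⟨Unit, inferInstance, DFA.mk (fun _ _ => ()) () ∅, by
    ext x
    exact ⟨fun h => absurd h (Set.notMem_empty _), fun h => (h : False).elim⟩⟩

theorem isRegular_univ : Language.IsRegular {x : List α | True} :=
  ⟨Unit, inferInstance, DFA.mk (fun _ _ => ()) () Set.univ, by
    ext x; simp [DFA.mem_accepts]; trivial⟩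

theorem isRegular_congr {L M : Language α} (hL : L.IsRegular) (h : ∀ x, x ∈ L ↔ x ∈ M) :
    M.IsRegular := by
  have : L = M := by ext x; exact h x
  rwa [this] at hL

theorem isRegular_preimage_map {β : Type} {L : Language β} (f : α → β) (hL : L.IsRegular) :
    Language.IsRegular {x : List α | x.map f ∈ L} := by
  obtain ⟨σ, _, D, rfl⟩ := hL
  exact ⟨σ, inferInstance, D.comap f, by rw [DFA.accepts_comap]; rfl⟩

theorem isRegular_finUnion {ι : Type*} [Fintype ι] (f : ι → Language α)
    (hf : ∀ i, (f i).IsRegular) : Language.IsRegular {x | ∃ i, x ∈ f i} := by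
  classical
  have key : ∀ s : Finset ι, Language.IsRegular {x | ∃ i ∈ s, x ∈ f i} := by
    intro s
    induction s using Finset.induction_on with
    | empty =>
      refine isRegular_congr isRegular_empty ?_
      intro x; simp
    | @insert j s hj ih =>
      refine isRegular_congr (isRegular_union (hf j) ih) ?_
      intro x
      simp only [Set.mem_setOf_eq, Finset.mem_insert]
      constructor
      · rintro (h | ⟨i, hi, h⟩)
        · exact ⟨j, Or.inl rfl, h⟩
        · exact ⟨i, Or.inr hi, h⟩
      · rintro ⟨i, hi | hi, h⟩
        · subst hi; exact Or.inl h
        · exact Or.inr ⟨i, hi, h⟩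
  refine isRegular_congr (key Finset.univ) ?_
  intro x; simp

/-- dead-state absorption helper -/
theorem evalFrom_none_of_step_none {β σ : Type*} (D : DFA β (Option σ))
    (hdead : ∀ b, D.step none b = none) (x : List β) : D.evalFrom none x = none := by
  induction x with
  | nil => rfl
  | cons b x ih => show D.evalFrom (D.step none b) x = none; rw [hdead]; exact ih

/-! ### singleton language -/

noncomputable def sglDFA (w₀ : List α) : DFA α (Option {l : List α // l <:+ w₀}) where
  step := fun s a => match s with
    | none => none
    | some ⟨[], _⟩ => none
    | some ⟨a' :: l', h⟩ => if a = a' then some ⟨l', (List.suffix_cons a' l').trans h⟩ else none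
  start := some ⟨w₀, List.suffix_refl w₀⟩
  accept := {some ⟨[], List.nil_suffix⟩}

theorem sglDFA_dead (w₀ : List α) (b : α) : (sglDFA w₀).step none b = none := rfl

theorem sglDFA_key (w₀ : List α) (x : List α) : ∀ (l : List α) (hl : l <:+ w₀),
    ((sglDFA w₀).evalFrom (some ⟨l, hl⟩) x ∈ (sglDFA w₀).accept) ↔ x = l := by
  induction x with
  | nil =>
    intro l hl
    rw [DFA.evalFrom_nil]
    show some (⟨l, hl⟩ : {l : List α // l <:+ w₀})
        ∈ ({some ⟨[], List.nil_suffix⟩} : Set (Option {l : List α // l <:+ w₀})) ↔ _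
    simp only [Set.mem_singleton_iff, Option.some.injEq, Subtype.mk.injEq]
    exact ⟨fun h => h.symm, fun h => h.symm⟩
  | cons a x ih =>
    intro l hl
    show (sglDFA w₀).evalFrom ((sglDFA w₀).step (some ⟨l, hl⟩) a) x ∈ _ ↔ _
    cases l with
    | nil =>
      have hstep : (sglDFA w₀).step (some ⟨[], hl⟩) a = none := rfl
      rw [hstep, evalFrom_none_of_step_none _ (sglDFA_dead w₀)]
      constructor
      · intro h; exact nomatch Set.mem_singleton_iff.mp h
      · intro h; cases h
    | cons a' l' =>
      by_cases hc : a = a'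
      · subst hc
        have hstep : (sglDFA w₀).step (some ⟨a :: l', hl⟩) a
            = some ⟨l', (List.suffix_cons a l').trans hl⟩ := by
          unfold sglDFA
          simp
        rw [hstep, ih]
        simp
      · have hstep : (sglDFA w₀).step (some ⟨a' :: l', hl⟩) a = none := by
          unfold sglDFA
          simp [hc]
        rw [hstep, evalFrom_none_of_step_none _ (sglDFA_dead w₀)]
        constructor
        · intro h; exact nomatch Set.mem_singleton_iff.mp h
        · intro h
          rw [List.cons.injEq] at h
          exact absurd h.1 hc

noncomputable instance sglFintype (w₀ : List α) : Fintype {l : List α // l <:+ w₀} := by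
  refine Fintype.ofInjective (fun l => (⟨l.val.length, by
    have := List.IsSuffix.length_le l.2; omega⟩ : Fin (w₀.length + 1))) ?_
  rintro ⟨l1, h1⟩ ⟨l2, h2⟩ h
  simp only [Fin.mk.injEq] at h
  obtain ⟨t1, rfl⟩ := h1
  obtain ⟨t2, ht⟩ := h2
  have hlen : t1.length = t2.length := by
    have := congrArg List.length ht
    simp only [List.length_append] at this
    omega
  have h2 : l2 = List.drop t1.length (t1 ++ l1) := by
    rw [hlen, ← ht, List.drop_left]
  simp only [List.drop_left] at h2
  exact Subtype.ext h2.symm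

theorem isRegular_singleton (w₀ : List α) : Language.IsRegular {w | w = w₀} := by
  refine ⟨Option {l : List α // l <:+ w₀}, inferInstance, sglDFA w₀, ?_⟩
  ext x
  rw [DFA.mem_accepts]
  exact sglDFA_key w₀ x w₀ (List.suffix_refl w₀)

/-! ### first letter / last letter -/

noncomputable def firstDFA (p : α → Prop) : DFA α (Fin 3) where
  step := fun s a => if s.val = 0 then (if p a then 1 else 2) else s
  start := 0
  accept := {1}

theorem firstDFA_abs (p : α → Prop) (x : List α) : ∀ s : Fin 3, s ≠ 0 →
    (firstDFA p).evalFrom s x = s := by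
  induction x with
  | nil => intro s _; rfl
  | cons a x ih =>
    intro s hs
    show (firstDFA p).evalFrom ((firstDFA p).step s a) x = s
    have hv : s.val ≠ 0 := fun h => hs (Fin.ext h)
    have : (firstDFA p).step s a = s := by
      unfold firstDFA
      simp [hv]
    rw [this]
    exact ih s hs

theorem isRegular_firstIn (p : α → Prop) :
    Language.IsRegular {w : List α | ∃ a w', w = a :: w' ∧ p a} := by
  refine ⟨Fin 3, inferInstance, firstDFA p, ?_⟩
  ext x
  rw [DFA.mem_accepts]
  cases x with
  | nil =>
    show (0 : Fin 3) ∈ ({1} : Set (Fin 3)) ↔ _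
    constructor
    · intro h; exact absurd (h : (0 : Fin 3) = 1) (by decide)
    · rintro ⟨a, w', h, _⟩; cases h
  | cons a x =>
    show (firstDFA p).evalFrom ((firstDFA p).step 0 a) x ∈ _ ↔ _
    by_cases hp : p a
    · have h1 : (firstDFA p).step 0 a = 1 := by
        unfold firstDFA
        simp [hp]
      rw [h1, firstDFA_abs p x 1 (by decide)]
      exact ⟨fun _ => ⟨a, x, rfl, hp⟩, fun _ => rfl⟩
    · have h2 : (firstDFA p).step 0 a = 2 := by
        unfold firstDFA
        simp [hp]
      rw [h2, firstDFA_abs p x 2 (by decide)]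
      constructor
      · intro h
        have h2 : (2 : Fin 3) = 1 := h
        exact absurd h2 (by decide)
      · rintro ⟨a', w', he, hp'⟩
        rw [List.cons.injEq] at he
        rw [← he.1] at hp'
        exact absurd hp' hp

noncomputable def lastDFA (p : α → Prop) : DFA α (Option Bool) where
  step := fun _ a => if p a then some true else some false
  start := none
  accept := {some true}

theorem isRegular_lastIn (p : α → Prop) :
    Language.IsRegular {w : List α | ∃ b, w.getLast? = some b ∧ p b} := by
  refine ⟨Option Bool, inferInstance, lastDFA p, ?_⟩
  ext x
  rw [DFA.mem_accepts]
  induction x using List.reverseRecOn with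
  | nil =>
    show (none : Option Bool) ∈ ({some true} : Set (Option Bool)) ↔ _
    constructor
    · intro h; exact nomatch Set.mem_singleton_iff.mp h
    · rintro ⟨b, hb, _⟩; cases hb
  | append_singleton w b _ =>
    show (lastDFA p).eval (w ++ [b]) ∈ _ ↔ _
    rw [DFA.eval, DFA.evalFrom_append_singleton]
    by_cases hp : p b
    · have h1 : ∀ s, (lastDFA p).step s b = some true := by
        intro s
        unfold lastDFA
        simp [hp]
      rw [h1]
      constructor
      · intro _; exact ⟨b, by rw [List.getLast?_concat], hp⟩
      · intro _; rfl
    · have h2 : ∀ s, (lastDFA p).step s b = some false := by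
        intro s
        unfold lastDFA
        simp [hp]
      rw [h2]
      constructor
      · intro h
        have h2 : (some false : Option Bool) = some true := h
        simp at h2
      · rintro ⟨b', hb, hp'⟩
        rw [List.getLast?_concat, Option.some_inj] at hb
        subst hb; exact absurd hp' hp

end Generic

theorem lang_mem_setOf_eq {α : Type*} {p : List α → Prop} {x : List α} :
    @Membership.mem (List α) (Language α) Language.instMembershipList (setOf p) x = p x := rfl


theorem DFA.evalFrom_cons {α σ : Type*} (D : DFA α σ) (s : σ) (ℓ : α) (x : List α) :
    D.evalFrom s (ℓ :: x) = D.evalFrom (D.step s ℓ) x := rfl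

/-- product-with-padding DFA -/
noncomputable def rectDFA (D1 : DFA A σ1) (D2 : DFA A σ2) :
    DFA (Option A × Option A) (Option (σ1 × σ2 × Bool × Bool)) where
  step := fun st ℓ => match st with
    | none => none
    | some (s, t, fx, fy) =>
      if (ℓ.1 = none ∧ ℓ.2 = none) ∨ (fx = true ∧ ℓ.1 ≠ none) ∨ (fy = true ∧ ℓ.2 ≠ none)
      then none
      else some ((match ℓ.1 with | some a => D1.step s a | none => s),
                 (match ℓ.2 with | some b => D2.step t b | none => t),
                 ℓ.1.isNone, ℓ.2.isNone)
  start := some (D1.start, D2.start, false, false)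
  accept := {x | ∃ s t fx fy, x = some (s, t, fx, fy) ∧ s ∈ D1.accept ∧ t ∈ D2.accept}

theorem rectDFA_dead (D1 : DFA A σ1) (D2 : DFA A σ2) (ℓ) :
    (rectDFA D1 D2).step none ℓ = none := rfl

theorem rectDFA_none_not_acc (D1 : DFA A σ1) (D2 : DFA A σ2) :
    none ∉ (rectDFA D1 D2).accept := by
  rintro ⟨s, t, fx, fy, h, -⟩
  exact nomatch h

theorem rectDFA_step_ns (D1 : DFA A σ1) (D2 : DFA A σ2) (s t fx b) :
    (rectDFA D1 D2).step (some (s, t, fx, false)) (none, some b)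
      = some (s, D2.step t b, true, false) := by
  unfold rectDFA; simp

theorem rectDFA_step_sn (D1 : DFA A σ1) (D2 : DFA A σ2) (s t fy a) :
    (rectDFA D1 D2).step (some (s, t, false, fy)) (some a, none)
      = some (D1.step s a, t, false, true) := by
  unfold rectDFA; simp

theorem rectDFA_step_ss (D1 : DFA A σ1) (D2 : DFA A σ2) (s t a b) :
    (rectDFA D1 D2).step (some (s, t, false, false)) (some a, some b)
      = some (D1.step s a, D2.step t b, false, false) := by
  unfold rectDFA; simp

theorem rectDFA_complete (D1 : DFA A σ1) (D2 : DFA A σ2) :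
    ∀ (u v : List A) (s : σ1) (t : σ2) (fx fy : Bool),
      (fx = true → u = []) → (fy = true → v = []) →
      ∃ fx' fy', (rectDFA D1 D2).evalFrom (some (s, t, fx, fy)) (padMap u v)
        = some (D1.evalFrom s u, D2.evalFrom t v, fx', fy') := by
  intro u
  induction u with
  | nil =>
    intro v
    induction v with
    | nil =>
      intro s t fx fy _ _
      exact ⟨fx, fy, rfl⟩
    | cons b v ihv =>
      intro s t fx fy hfx hfy
      have hfy0 : fy = false := by
        cases fy
        · rfl
        · exact absurd (hfy rfl) (by simp)
      subst hfy0
      rw [padMap_nil_cons, DFA.evalFrom_cons, rectDFA_step_ns]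
      exact ihv s (D2.step t b) true false (fun _ => rfl) (by simp)
  | cons a u ihu =>
    intro v s t fx fy hfx hfy
    have hfx0 : fx = false := by
      cases fx
      · rfl
      · exact absurd (hfx rfl) (by simp)
    subst hfx0
    cases v with
    | nil =>
      rw [padMap_cons_nil, DFA.evalFrom_cons, rectDFA_step_sn]
      exact ihu [] (D1.step s a) t false true (by simp) (fun _ => rfl)
    | cons b v =>
      have hfy0 : fy = false := by
        cases fy
        · rfl
        · exact absurd (hfy rfl) (by simp)
      subst hfy0
      rw [padMap_cons_cons, DFA.evalFrom_cons, rectDFA_step_ss]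
      exact ihu v (D1.step s a) (D2.step t b) false false (by simp) (by simp)

theorem evalFrom_none_rect (D1 : DFA A σ1) (D2 : DFA A σ2) (x) :
    (rectDFA D1 D2).evalFrom none x = none := by
  induction x with
  | nil => rfl
  | cons ℓ x ih =>
    rw [DFA.evalFrom_cons, rectDFA_dead]; exact ih

theorem rectDFA_sound (D1 : DFA A σ1) (D2 : DFA A σ2) :
    ∀ (q : List (Option A × Option A)) (s : σ1) (t : σ2) (fx fy : Bool),
      (rectDFA D1 D2).evalFrom (some (s, t, fx, fy)) q ∈ (rectDFA D1 D2).accept →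
      ∃ u v, q = padMap u v ∧ (fx = true → u = []) ∧ (fy = true → v = []) ∧
        D1.evalFrom s u ∈ D1.accept ∧ D2.evalFrom t v ∈ D2.accept := by
  intro q
  induction q with
  | nil =>
    intro s t fx fy hacc
    rw [DFA.evalFrom_nil] at hacc
    obtain ⟨s', t', fx', fy', heq, h1, h2⟩ := hacc
    rw [Option.some_inj] at heq
    cases heq
    exact ⟨[], [], rfl, fun _ => rfl, fun _ => rfl, h1, h2⟩
  | cons ℓ q ih =>
    intro s t fx fy hacc
    rw [DFA.evalFrom_cons] at hacc
    obtain ⟨x1, x2⟩ := ℓ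
    have dead : ∀ (h : (rectDFA D1 D2).step (some (s, t, fx, fy)) (x1, x2) = none), False := by
      intro h
      rw [h, evalFrom_none_rect] at hacc
      exact rectDFA_none_not_acc D1 D2 hacc
    cases x1 with
    | none =>
      cases x2 with
      | none =>
        refine absurd ?_ (fun h => dead h)
        unfold rectDFA
        simp
      | some b =>
        have hfy0 : fy = false := by
          cases fy
          · rfl
          · refine absurd ?_ (fun h => dead h)
            unfold rectDFA
            simp
        subst hfy0
        rw [rectDFA_step_ns] at hacc
        obtain ⟨u', v', hq, hfx', hfy', hs, ht⟩ := ih _ _ _ _ hacc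
        have hu' : u' = [] := hfx' rfl
        subst hu'
        refine ⟨[], b :: v', ?_, fun _ => rfl, ?_, hs, ht⟩
        · rw [padMap_nil_cons, ← hq]
        · intro h; exact Bool.noConfusion h
    | some a =>
      have hfx0 : fx = false := by
        cases fx
        · rfl
        · refine absurd ?_ (fun h => dead h)
          unfold rectDFA
          simp
      subst hfx0
      cases x2 with
      | none =>
        rw [rectDFA_step_sn] at hacc
        obtain ⟨u', v', hq, hfx', hfy', hs, ht⟩ := ih _ _ _ _ hacc
        have hv' : v' = [] := hfy' rfl
        subst hv'
        refine ⟨a :: u', [], ?_, ?_, fun _ => rfl, hs, ht⟩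
        · rw [padMap_cons_nil, ← hq]
        · intro h; exact Bool.noConfusion h
      | some b =>
        have hfy0 : fy = false := by
          cases fy
          · rfl
          · refine absurd ?_ (fun h => dead h)
            unfold rectDFA
            simp
        subst hfy0
        rw [rectDFA_step_ss] at hacc
        obtain ⟨u', v', hq, hfx', hfy', hs, ht⟩ := ih _ _ _ _ hacc
        refine ⟨a :: u', b :: v', ?_, ?_, ?_, hs, ht⟩
        · rw [padMap_cons_cons, ← hq]
        · intro h; exact Bool.noConfusion h
        · intro h; exact Bool.noConfusion h




/-! ### NFA helpers -/

theorem nfa_evalFrom_cons {α σ : Type*} (N : NFA α σ) (S : Set σ) (ℓ : α) (x : List α) :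
    N.evalFrom S (ℓ :: x) = N.evalFrom (N.stepSet S ℓ) x := rfl

theorem nfa_evalFrom_mono {α σ : Type*} (N : NFA α σ) {S T : Set σ} (h : S ⊆ T) (x : List α) :
    N.evalFrom S x ⊆ N.evalFrom T x := by
  induction x generalizing S T with
  | nil => exact h
  | cons a x ih =>
    rw [nfa_evalFrom_cons, nfa_evalFrom_cons]
    refine ih ?_
    intro p hp
    rw [NFA.mem_stepSet] at hp ⊢
    obtain ⟨q, hq, hstep⟩ := hp
    exact ⟨q, h hq, hstep⟩

theorem nfa_mem_evalFrom_iff {α σ : Type*} (N : NFA α σ) (S : Set σ) (x : List α) (f : σ) :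
    f ∈ N.evalFrom S x ↔ ∃ s ∈ S, f ∈ N.evalFrom {s} x := by
  induction x generalizing S with
  | nil =>
    constructor
    · intro h; exact ⟨f, h, rfl⟩
    · rintro ⟨s, hs, h⟩
      have : f = s := h
      rwa [this]
  | cons a x ih =>
    rw [nfa_evalFrom_cons, ih]
    constructor
    · rintro ⟨s', hs', hf⟩
      rw [NFA.mem_stepSet] at hs'
      obtain ⟨s, hs, hstep⟩ := hs'
      refine ⟨s, hs, ?_⟩
      rw [nfa_evalFrom_cons, ih]
      refine ⟨s', ?_, hf⟩
      rw [NFA.mem_stepSet]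
      exact ⟨s, rfl, hstep⟩
    · rintro ⟨s, hs, hf⟩
      rw [nfa_evalFrom_cons, ih] at hf
      obtain ⟨s', hs', hf⟩ := hf
      rw [NFA.mem_stepSet] at hs'
      obtain ⟨s₀, hs₀, hstep⟩ := hs'
      have : s₀ = s := hs₀
      subst this
      refine ⟨s', ?_, hf⟩
      rw [NFA.mem_stepSet]
      exact ⟨s₀, hs, hstep⟩

/-! ### the composition NFA -/

noncomputable def compNFA (D1 : DFA (Option A × Option A) σ1)
    (D2 : DFA (Option A × Option A) σ2) :
    NFA (Option A × Option A) (σ1 × σ2 × Bool × Bool × Bool) where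
  step := fun st ℓ =>
    {p | ∃ zo : Option A,
      ¬(ℓ.1 = none ∧ ℓ.2 = none) ∧
      (st.2.2.1 = true → ℓ.1 = none) ∧
      (st.2.2.2.1 = true → ℓ.2 = none) ∧
      (st.2.2.2.2 = true → zo = none) ∧
      p = ((if ℓ.1 = none ∧ zo = none then st.1 else D1.step st.1 (ℓ.1, zo)),
           (if zo = none ∧ ℓ.2 = none then st.2.1 else D2.step st.2.1 (zo, ℓ.2)),
           ℓ.1.isNone, ℓ.2.isNone, zo.isNone)}
  start := {(D1.start, D2.start, false, false, false)}
  accept := {st | ∃ tl : List A, (st.2.2.2.2 = true → tl = []) ∧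
    D1.evalFrom st.1 (tl.map fun z => ((none : Option A), some z)) ∈ D1.accept ∧
    D2.evalFrom st.2.1 (tl.map fun z => (some z, (none : Option A))) ∈ D2.accept}

theorem mem_compNFA_step (D1 : DFA (Option A × Option A) σ1)
    (D2 : DFA (Option A × Option A) σ2) (s t fx fy fz xo yo) (p) :
    p ∈ (compNFA D1 D2).step (s, t, fx, fy, fz) (xo, yo) ↔
      ∃ zo : Option A,
      ¬(xo = none ∧ yo = none) ∧
      (fx = true → xo = none) ∧
      (fy = true → yo = none) ∧
      (fz = true → zo = none) ∧
      p = ((if xo = none ∧ zo = none then s else D1.step s (xo, zo)),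
           (if zo = none ∧ yo = none then t else D2.step t (zo, yo)),
           xo.isNone, yo.isNone, zo.isNone) := Iff.rfl

theorem mem_compNFA_accept (D1 : DFA (Option A × Option A) σ1)
    (D2 : DFA (Option A × Option A) σ2) (s t fx fy fz) :
    (s, t, fx, fy, fz) ∈ (compNFA D1 D2).accept ↔
      ∃ tl : List A, (fz = true → tl = []) ∧
        D1.evalFrom s (tl.map fun z => ((none : Option A), some z)) ∈ D1.accept ∧
        D2.evalFrom t (tl.map fun z => (some z, (none : Option A))) ∈ D2.accept := Iff.rfl

theorem compNFA_complete (D1 : DFA (Option A × Option A) σ1)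
    (D2 : DFA (Option A × Option A) σ2) :
    ∀ (u v w : List A) (s : σ1) (t : σ2) (fx fy fz : Bool),
      (fx = true → u = []) → (fy = true → v = []) → (fz = true → w = []) →
      D1.evalFrom s (padMap u w) ∈ D1.accept →
      D2.evalFrom t (padMap w v) ∈ D2.accept →
      ∃ f ∈ (compNFA D1 D2).accept,
        f ∈ (compNFA D1 D2).evalFrom {(s, t, fx, fy, fz)} (padMap u v) := by
  intro u
  induction u with
  | nil =>
    intro v
    induction v with
    | nil =>
      intro w s t fx fy fz _ _ hfz h1 h2
      refine ⟨(s, t, fx, fy, fz), ?_, rfl⟩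
      rw [mem_compNFA_accept]
      refine ⟨w, hfz, ?_, ?_⟩
      · rwa [← padMap_nil_left]
      · rwa [← padMap_nil_right]
    | cons b v ihv =>
      intro w s t fx fy fz hfx hfy hfz h1 h2
      have hfy0 : fy = false := by
        cases fy
        · rfl
        · exact absurd (hfy rfl) (by simp)
      subst hfy0
      rw [padMap_nil_cons, nfa_evalFrom_cons]
      cases w with
      | nil =>
        obtain ⟨f, hf, hev⟩ := ihv [] s (D2.step t (none, some b)) true false true
          (fun _ => rfl) (by simp) (fun _ => rfl)
          (by rwa [show padMap ([] : List A) [] = [] from rfl] at h1 ⊢)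
          (by rw [padMap_nil_cons] at h2; exact h2)
        refine ⟨f, hf, ?_⟩
        refine nfa_evalFrom_mono _ ?_ _ hev
        intro p hp
        have : p = (s, D2.step t (none, some b), true, false, true) := hp
        subst this
        rw [NFA.mem_stepSet]
        refine ⟨(s, t, fx, false, fz), rfl, ?_⟩
        rw [mem_compNFA_step]
        exact ⟨none, by simp, fun _ => rfl, by simp, fun _ => rfl, by simp⟩
      | cons z w' =>
        have hfz0 : fz = false := by
          cases fz
          · rfl
          · exact absurd (hfz rfl) (by simp)
        subst hfz0
        rw [padMap_nil_cons] at h1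
        rw [padMap_cons_cons] at h2
        obtain ⟨f, hf, hev⟩ := ihv w' (D1.step s (none, some z))
          (D2.step t (some z, some b)) true false false
          (fun _ => rfl) (by simp) (by simp) h1 h2
        refine ⟨f, hf, ?_⟩
        refine nfa_evalFrom_mono _ ?_ _ hev
        intro p hp
        have : p = (D1.step s (none, some z), D2.step t (some z, some b),
            true, false, false) := hp
        subst this
        rw [NFA.mem_stepSet]
        refine ⟨(s, t, fx, false, false), rfl, ?_⟩
        rw [mem_compNFA_step]
        refine ⟨some z, by simp, fun _ => rfl, by simp, by simp, by simp⟩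
  | cons a u ihu =>
    intro v w s t fx fy fz hfx hfy hfz h1 h2
    have hfx0 : fx = false := by
      cases fx
      · rfl
      · exact absurd (hfx rfl) (by simp)
    subst hfx0
    cases v with
    | nil =>
      rw [padMap_cons_nil, nfa_evalFrom_cons]
      cases w with
      | nil =>
        obtain ⟨f, hf, hev⟩ := ihu [] [] (D1.step s (some a, none)) t false true true
          (by simp) (fun _ => rfl) (fun _ => rfl)
          (by rw [padMap_cons_nil] at h1; exact h1)
          (by rwa [show padMap ([] : List A) [] = [] from rfl] at h2 ⊢)
        refine ⟨f, hf, ?_⟩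
        refine nfa_evalFrom_mono _ ?_ _ hev
        intro p hp
        have : p = (D1.step s (some a, none), t, false, true, true) := hp
        subst this
        rw [NFA.mem_stepSet]
        refine ⟨(s, t, false, fy, fz), rfl, ?_⟩
        rw [mem_compNFA_step]
        exact ⟨none, by simp, by simp, fun _ => rfl, fun _ => rfl, by simp⟩
      | cons z w' =>
        have hfz0 : fz = false := by
          cases fz
          · rfl
          · exact absurd (hfz rfl) (by simp)
        subst hfz0
        obtain ⟨f, hf, hev⟩ := ihu [] w' (D1.step s (some a, some z))
          (D2.step t (some z, none)) false true false
          (by simp) (fun _ => rfl) (by simp)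
          (by rw [padMap_cons_cons] at h1; exact h1)
          (by rw [padMap_cons_nil] at h2; exact h2)
        refine ⟨f, hf, ?_⟩
        refine nfa_evalFrom_mono _ ?_ _ hev
        intro p hp
        have : p = (D1.step s (some a, some z), D2.step t (some z, none),
            false, true, false) := hp
        subst this
        rw [NFA.mem_stepSet]
        refine ⟨(s, t, false, fy, false), rfl, ?_⟩
        rw [mem_compNFA_step]
        refine ⟨some z, by simp, by simp, fun _ => rfl, by simp, by simp⟩
    | cons b v =>
      have hfy0 : fy = false := by
        cases fy
        · rfl
        · exact absurd (hfy rfl) (by simp)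
      subst hfy0
      rw [padMap_cons_cons, nfa_evalFrom_cons]
      cases w with
      | nil =>
        obtain ⟨f, hf, hev⟩ := ihu v [] (D1.step s (some a, none))
          (D2.step t (none, some b)) false false true
          (by simp) (by simp) (fun _ => rfl)
          (by rw [padMap_cons_nil] at h1; exact h1)
          (by rw [padMap_nil_cons] at h2; exact h2)
        refine ⟨f, hf, ?_⟩
        refine nfa_evalFrom_mono _ ?_ _ hev
        intro p hp
        have : p = (D1.step s (some a, none), D2.step t (none, some b),
            false, false, true) := hp
        subst this
        rw [NFA.mem_stepSet]
        refine ⟨(s, t, false, false, fz), rfl, ?_⟩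
        rw [mem_compNFA_step]
        exact ⟨none, by simp, by simp, by simp, fun _ => rfl, by simp⟩
      | cons z w' =>
        have hfz0 : fz = false := by
          cases fz
          · rfl
          · exact absurd (hfz rfl) (by simp)
        subst hfz0
        obtain ⟨f, hf, hev⟩ := ihu v w' (D1.step s (some a, some z))
          (D2.step t (some z, some b)) false false false
          (by simp) (by simp) (by simp)
          (by rw [padMap_cons_cons] at h1; exact h1)
          (by rw [padMap_cons_cons] at h2; exact h2)
        refine ⟨f, hf, ?_⟩
        refine nfa_evalFrom_mono _ ?_ _ hev
        intro p hp
        have : p = (D1.step s (some a, some z), D2.step t (some z, some b),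
            false, false, false) := hp
        subst this
        rw [NFA.mem_stepSet]
        refine ⟨(s, t, false, false, false), rfl, ?_⟩
        rw [mem_compNFA_step]
        refine ⟨some z, by simp, by simp, by simp, by simp, by simp⟩





theorem compNFA_sound (D1 : DFA (Option A × Option A) σ1)
    (D2 : DFA (Option A × Option A) σ2) :
    ∀ (q : List (Option A × Option A)) (s : σ1) (t : σ2) (fx fy fz : Bool),
      (∃ f ∈ (compNFA D1 D2).accept,
        f ∈ (compNFA D1 D2).evalFrom {(s, t, fx, fy, fz)} q) →
      ∃ u v w, q = padMap u v ∧ (fx = true → u = []) ∧ (fy = true → v = []) ∧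
        (fz = true → w = []) ∧
        D1.evalFrom s (padMap u w) ∈ D1.accept ∧ D2.evalFrom t (padMap w v) ∈ D2.accept := by
  intro q
  induction q with
  | nil =>
    intro s t fx fy fz ⟨f, hf, hev⟩
    have : f = (s, t, fx, fy, fz) := hev
    subst this
    obtain ⟨tl, htl, ha, hb⟩ := hf
    refine ⟨[], [], tl, rfl, fun _ => rfl, fun _ => rfl, htl, ?_, ?_⟩
    · rw [padMap_nil_left]; exact ha
    · rw [padMap_nil_right]; exact hb
  | cons ℓ q ih =>
    intro s t fx fy fz ⟨f, hf, hev⟩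
    rw [nfa_evalFrom_cons, nfa_mem_evalFrom_iff] at hev
    obtain ⟨st', hst', hfev⟩ := hev
    rw [NFA.mem_stepSet] at hst'
    obtain ⟨st₀, hst₀, hstep⟩ := hst'
    have : st₀ = (s, t, fx, fy, fz) := hst₀
    subst this
    obtain ⟨xo, yo⟩ := ℓ
    rw [mem_compNFA_step] at hstep
    obtain ⟨zo, hnn, hgx, hgy, hgz, rfl⟩ := hstep
    obtain ⟨u', v', w', hq', hfx', hfy', hfz', hD1, hD2⟩ := ih _ _ _ _ _ ⟨f, hf, hfev⟩
    cases xo with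
    | none =>
      cases yo with
      | none => exact absurd ⟨rfl, rfl⟩ hnn
      | some b =>
        have hu' : u' = [] := hfx' rfl
        subst hu'
        cases zo with
        | none =>
          have hw' : w' = [] := hfz' rfl
          subst hw'
          refine ⟨[], b :: v', [], ?_, fun _ => rfl, ?_, fun _ => rfl, ?_, ?_⟩
          · rw [padMap_nil_cons, ← hq']
          · intro h; exact absurd (hgy h) (by simp)
          · simpa using hD1
          · rw [padMap_nil_cons, DFA.evalFrom_cons]
            simpa using hD2
        | some z =>
          refine ⟨[], b :: v', z :: w', ?_, fun _ => rfl, ?_, ?_, ?_, ?_⟩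
          · rw [padMap_nil_cons, ← hq']
          · intro h; exact absurd (hgy h) (by simp)
          · intro h; exact absurd (hgz h) (by simp)
          · rw [padMap_nil_cons, DFA.evalFrom_cons]
            simpa using hD1
          · rw [padMap_cons_cons, DFA.evalFrom_cons]
            simpa using hD2
    | some a =>
      cases yo with
      | none =>
        have hv' : v' = [] := hfy' rfl
        subst hv'
        cases zo with
        | none =>
          have hw' : w' = [] := hfz' rfl
          subst hw'
          refine ⟨a :: u', [], [], ?_, ?_, fun _ => rfl, fun _ => rfl, ?_, ?_⟩
          · rw [padMap_cons_nil, ← hq']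
          · intro h; exact absurd (hgx h) (by simp)
          · rw [padMap_cons_nil, DFA.evalFrom_cons]
            simpa using hD1
          · simpa using hD2
        | some z =>
          refine ⟨a :: u', [], z :: w', ?_, ?_, fun _ => rfl, ?_, ?_, ?_⟩
          · rw [padMap_cons_nil, ← hq']
          · intro h; exact absurd (hgx h) (by simp)
          · intro h; exact absurd (hgz h) (by simp)
          · rw [padMap_cons_cons, DFA.evalFrom_cons]
            simpa using hD1
          · rw [padMap_cons_nil, DFA.evalFrom_cons]
            simpa using hD2
      | some b =>
        cases zo with
        | none =>
          have hw' : w' = [] := hfz' rfl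
          subst hw'
          refine ⟨a :: u', b :: v', [], ?_, ?_, ?_, fun _ => rfl, ?_, ?_⟩
          · rw [padMap_cons_cons, ← hq']
          · intro h; exact absurd (hgx h) (by simp)
          · intro h; exact absurd (hgy h) (by simp)
          · rw [padMap_cons_nil, DFA.evalFrom_cons]
            simpa using hD1
          · rw [padMap_nil_cons, DFA.evalFrom_cons]
            simpa using hD2
        | some z =>
          refine ⟨a :: u', b :: v', z :: w', ?_, ?_, ?_, ?_, ?_, ?_⟩
          · rw [padMap_cons_cons, ← hq']
          · intro h; exact absurd (hgx h) (by simp)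
          · intro h; exact absurd (hgy h) (by simp)
          · intro h; exact absurd (hgz h) (by simp)
          · rw [padMap_cons_cons, DFA.evalFrom_cons]
            simpa using hD1
          · rw [padMap_cons_cons, DFA.evalFrom_cons]
            simpa using hD2

theorem isRegular_comp {R Q : List A → List A → Prop}
    (hR : (PadL R).IsRegular) (hQ : (PadL Q).IsRegular) :
    (PadL (fun u v => ∃ w, R u w ∧ Q w v)).IsRegular := by
  obtain ⟨σ1, _, D1, hD1⟩ := hR
  obtain ⟨σ2, _, D2, hD2⟩ := hQ
  have hacc : (compNFA D1 D2).accepts = PadL (fun u v => ∃ w, R u w ∧ Q w v) := by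
    ext x
    rw [NFA.mem_accepts]
    constructor
    · rintro ⟨f, hf, hev⟩
      obtain ⟨u, v, w, rfl, -, -, -, h1, h2⟩ :=
        compNFA_sound D1 D2 x D1.start D2.start false false false ⟨f, hf, hev⟩
      have hr : padMap u w ∈ PadL R := by rw [← hD1]; exact h1
      have hq : padMap w v ∈ PadL Q := by rw [← hD2]; exact h2
      exact ⟨u, v, ⟨w, padMap_mem_PadL.mp hr, padMap_mem_PadL.mp hq⟩, rfl⟩
    · rintro ⟨u, v, ⟨w, hruw, hqwv⟩, rfl⟩
      have h1 : D1.evalFrom D1.start (padMap u w) ∈ D1.accept := by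
        have : padMap u w ∈ PadL R := padMap_mem_PadL.mpr hruw
        rw [← hD1] at this; exact this
      have h2 : D2.evalFrom D2.start (padMap w v) ∈ D2.accept := by
        have : padMap w v ∈ PadL Q := padMap_mem_PadL.mpr hqwv
        rw [← hD2] at this; exact this
      obtain ⟨f, hf, hev⟩ := compNFA_complete D1 D2 u v w D1.start D2.start false false false
        (by simp) (by simp) (by simp) h1 h2
      exact ⟨f, hf, hev⟩
  have : Fintype (Set (σ1 × σ2 × Bool × Bool × Bool)) := Fintype.ofFinite _
  exact ⟨Set (σ1 × σ2 × Bool × Bool × Bool), this, (compNFA D1 D2).toDFA, by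
    rw [NFA.toDFA_correct, hacc]⟩




/-! ### the annotation recoding -/

/-- annotate a word with the previous letter -/
def go (p : Option A) : List A → List (Option A × A)
  | [] => []
  | a :: w => (p, a) :: go (some a) w

theorem go_nil (p : Option A) : go p ([] : List A) = [] := rfl

theorem go_cons (p : Option A) (a : A) (w : List A) :
    go p (a :: w) = (p, a) :: go (some a) w := rfl

theorem go_snd (p : Option A) (w : List A) : (go p w).map Prod.snd = w := by
  induction w generalizing p with
  | nil => rfl
  | cons a w ih => rw [go_cons, List.map_cons, ih]

def lastO (p : Option A) : List A → Option A
  | [] => p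
  | a :: w => lastO (some a) w

noncomputable def consDFA (A : Type) : DFA (Option A × A) (Option (Option A)) where
  step := fun st ℓ => match st with
    | none => none
    | some p => if ℓ.1 = p then some (some ℓ.2) else none
  start := some none
  accept := {st | ∃ a : A, st = some (some a)}

theorem consDFA_dead (ℓ) : (consDFA A).step none ℓ = none := rfl

theorem consDFA_evalFrom_none (x) : (consDFA A).evalFrom none x = none := by
  induction x with
  | nil => rfl
  | cons ℓ x ih => rw [DFA.evalFrom_cons, consDFA_dead]; exact ih

theorem consDFA_go (w : List A) : ∀ p, (consDFA A).evalFrom (some p) (go p w)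
    = some (lastO p w) := by
  induction w with
  | nil => intro p; rfl
  | cons a w ih =>
    intro p
    rw [go_cons, DFA.evalFrom_cons]
    have : (consDFA A).step (some p) (p, a) = some (some a) := by
      unfold consDFA; simp
    rw [this]
    exact ih (some a)

theorem consDFA_sound (q : List (Option A × A)) : ∀ p,
    (consDFA A).evalFrom (some p) q ∈ (consDFA A).accept →
    ∃ w, q = go p w ∧ ((p = none → w ≠ []) ∧ (w = [] → q = [])) := by
  induction q with
  | nil =>
    intro p hacc
    obtain ⟨a, ha⟩ := hacc
    rw [DFA.evalFrom_nil, Option.some_inj] at ha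
    refine ⟨[], rfl, ?_, fun _ => rfl⟩
    intro hp
    rw [hp] at ha
    exact fun _ => nomatch ha
  | cons ℓ q ih =>
    intro p hacc
    rw [DFA.evalFrom_cons] at hacc
    by_cases hc : ℓ.1 = p
    · have hstep : (consDFA A).step (some p) ℓ = some (some ℓ.2) := by
        unfold consDFA; simp [hc]
      rw [hstep] at hacc
      obtain ⟨w', hq, _, _⟩ := ih (some ℓ.2) hacc
      refine ⟨ℓ.2 :: w', ?_, fun _ h => List.cons_ne_nil _ _ h, fun h => absurd h (List.cons_ne_nil _ _)⟩
      rw [go_cons, ← hq, ← hc]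
    · have hstep : (consDFA A).step (some p) ℓ = none := by
        unfold consDFA; simp [hc]
      rw [hstep, consDFA_evalFrom_none] at hacc
      obtain ⟨a, ha⟩ := hacc
      exact absurd ha (by simp)

theorem consDFA_accepts (q : List (Option A × A)) :
    q ∈ (consDFA A).accepts ↔ ∃ w, w ≠ [] ∧ q = go none w := by
  rw [DFA.mem_accepts]
  constructor
  · intro h
    obtain ⟨w, hq, hne, -⟩ := consDFA_sound q none h
    exact ⟨w, hne rfl, hq⟩
  · rintro ⟨w, hne, rfl⟩
    show (consDFA A).evalFrom (some none) (go none w) ∈ _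
    rw [consDFA_go]
    cases w with
    | nil => exact absurd rfl hne
    | cons a w =>
      have : ∀ (w : List A) (a : A), ∃ b, lastO (some a) w = some b := by
        intro w
        induction w with
        | nil => intro a; exact ⟨a, rfl⟩
        | cons c w ih => intro a; exact ih c
      obtain ⟨b, hb⟩ := this w a
      exact ⟨b, by rw [show lastO none (a :: w) = lastO (some a) w from rfl, hb]⟩

theorem isRegular_cons_lang [Finite A] :
    Language.IsRegular {q : List (Option A × A) | ∃ w, w ≠ [] ∧ q = go none w} := by
  haveI : Fintype A := Fintype.ofFinite A
  refine ⟨Option (Option A), inferInstance, consDFA A, ?_⟩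
  ext q
  exact consDFA_accepts q

/-- the underlying-pair projection -/
def gmap : Option (Option A × A) × Option (Option A × A) → Option A × Option A :=
  fun c => (c.1.map Prod.snd, c.2.map Prod.snd)

theorem gmap_padMap (u v : List A) : ∀ p1 p2,
    (padMap (go p1 u) (go p2 v)).map gmap = padMap u v := by
  induction u generalizing v with
  | nil =>
    intro p1 p2
    induction v generalizing p2 with
    | nil => rfl
    | cons b v ihv =>
      rw [go_cons, go_nil, padMap_nil_cons, List.map_cons, padMap_nil_cons]
      have := ihv (some b)
      rw [show go p1 ([] : List A) = [] from rfl] at this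
      rw [this]
      rfl
  | cons a u ihu =>
    intro p1 p2
    cases v with
    | nil =>
      rw [go_cons, go_nil, padMap_cons_nil, List.map_cons, padMap_cons_nil]
      have := ihu [] (some a) p2
      rw [show go p2 ([] : List A) = [] from rfl] at this
      rw [this]
      rfl
    | cons b v =>
      rw [go_cons, go_cons, padMap_cons_cons, List.map_cons, padMap_cons_cons, ihu]
      rfl

section SgLemmas
open AutoSg

variable {S : Type*} [Semigroup S] {A : Type}

theorem foldl_mul_assoc (l : List S) (x y : S) :
    l.foldl (· * ·) (x * y) = x * l.foldl (· * ·) y := by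
  induction l generalizing y with
  | nil => rfl
  | cons a l ih =>
    show l.foldl (· * ·) (x * y * a) = x * l.foldl (· * ·) (y * a)
    rw [mul_assoc]
    exact ih (y * a)

theorem evalWord_cons (ψ : A → S) (a : A) (w : List A) :
    evalWord ψ (a :: w) = some ((w.map ψ).foldl (· * ·) (ψ a)) := rfl

theorem evalWord_some (ψ : A → S) {w : List A} (h : w ≠ []) :
    ∃ s, evalWord ψ w = some s := by
  cases w with
  | nil => exact absurd rfl h
  | cons a w => exact ⟨_, rfl⟩

theorem evalWord_append (ψ : A → S) {x y : List A} {sx sy : S}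
    (hx : evalWord ψ x = some sx) (hy : evalWord ψ y = some sy) :
    evalWord ψ (x ++ y) = some (sx * sy) := by
  cases x with
  | nil => exact absurd hx (by simp [evalWord])
  | cons a x =>
    cases y with
    | nil => exact absurd hy (by simp [evalWord])
    | cons b y =>
      rw [evalWord_cons, Option.some_inj] at hx hy
      rw [show (a :: x) ++ b :: y = a :: (x ++ b :: y) from rfl, evalWord_cons,
        List.map_append, List.foldl_append, hx, List.map_cons, List.foldl_cons,
        foldl_mul_assoc, hy]

theorem evalWord_append_singleton (ψ : A → S) {x : List A} {sx : S}
    (hx : evalWord ψ x = some sx) (a : A) :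
    evalWord ψ (x ++ [a]) = some (sx * ψ a) := by
  exact evalWord_append ψ hx rfl

end SgLemmas

section ReesLemmas
open AutoSg

variable {U I J : Type*} [Semigroup U] {P : J → I → U} {A : Type}

/-- view an element of the Rees matrix semigroup as a triple -/
def cmp {U I J : Type*} {P : J → I → U} (x : ReesMatrix U I J P) : I × U × J := x

def rmk (P : J → I → U) (l : I) (m : U) (r : J) : ReesMatrix U I J P := (l, m, r)

theorem rmk_mul (l l' : I) (m m' : U) (r r' : J) :
    rmk P l m r * rmk P l' m' r' = rmk P l (m * P r l' * m') r' := rfl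

theorem rmk_eta (x : ReesMatrix U I J P) : x = rmk P (cmp x).1 (cmp x).2.1 (cmp x).2.2 := rfl

theorem rmk_inj {l l' : I} {m m' : U} {r r' : J} (h : rmk P l m r = rmk P l' m' r') :
    l = l' ∧ m = m' ∧ r = r' := by
  have h1 : (cmp (rmk P l m r)).1 = (cmp (rmk P l' m' r')).1 :=
    congrArg (fun x => (cmp x).1) h
  have h2 : (cmp (rmk P l m r)).2.1 = (cmp (rmk P l' m' r')).2.1 :=
    congrArg (fun x => (cmp x).2.1) h
  have h3 : (cmp (rmk P l m r)).2.2 = (cmp (rmk P l' m' r')).2.2 :=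
    congrArg (fun x => (cmp x).2.2) h
  exact ⟨h1, h2, h3⟩

variable (ψ : A → ReesMatrix U I J P)

def laF (a : A) : I := (cmp (ψ a)).1
def vaF (a : A) : U := (cmp (ψ a)).2.1
def raF (a : A) : J := (cmp (ψ a)).2.2

theorem psi_eq (a : A) : ψ a = rmk P (laF ψ a) (vaF ψ a) (raF ψ a) := rfl

/-- accumulate the middle component and right coordinate along a word -/
def uMid : U → J → List A → U × J
  | m, r, [] => (m, r)
  | m, r, b :: w => uMid (m * P r (laF ψ b) * vaF ψ b) (raF ψ b) w

theorem uMid_nil (m r) : uMid ψ m r [] = (m, r) := rfl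
theorem uMid_cons (m r b w) :
    uMid ψ m r (b :: w) = uMid ψ (m * P r (laF ψ b) * vaF ψ b) (raF ψ b) w := rfl

theorem foldl_rees (w : List A) : ∀ (l : I) (m : U) (r : J),
    (w.map ψ).foldl (· * ·) (rmk P l m r)
      = rmk P l (uMid ψ m r w).1 (uMid ψ m r w).2 := by
  induction w with
  | nil => intro l m r; rfl
  | cons b w ih =>
    intro l m r
    rw [List.map_cons, List.foldl_cons]
    rw [show rmk P l m r * ψ b = rmk P l (m * P r (laF ψ b) * vaF ψ b) (raF ψ b) from rfl]
    rw [ih, uMid_cons]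

theorem evalWord_rees (a : A) (w : List A) :
    evalWord ψ (a :: w) = some (rmk P (laF ψ a) (uMid ψ (vaF ψ a) (raF ψ a) w).1
      (uMid ψ (vaF ψ a) (raF ψ a) w).2) := by
  rw [evalWord_cons, Option.some_inj, show ψ a = rmk P (laF ψ a) (vaF ψ a) (raF ψ a) from rfl,
    foldl_rees]

theorem uMid_append (w : List A) : ∀ (m : U) (r : J) (b : A),
    uMid ψ m r (w ++ [b])
      = ((uMid ψ m r w).1 * P (uMid ψ m r w).2 (laF ψ b) * vaF ψ b, raF ψ b) := by
  induction w with
  | nil => intro m r b; rfl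
  | cons c w ih =>
    intro m r b
    rw [List.cons_append, uMid_cons, ih, uMid_cons]

theorem uMid_snd (w : List A) : ∀ (m : U) (r : J),
    (uMid ψ m r w).2 = (match w.getLast? with | some b => raF ψ b | none => r) := by
  induction w using List.reverseRecOn with
  | nil => intro m r; rfl
  | append_singleton w b _ =>
    intro m r
    rw [uMid_append, List.getLast?_concat]

theorem uMid_snd_cons (a : A) (w' : List A) (b : A) (h : (a :: w').getLast? = some b)
    (m : U) : (uMid ψ m (raF ψ a) w').2 = raF ψ b := by
  rcases w'.eq_nil_or_concat with rfl | ⟨y, c, hy⟩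
  · have : b = a := by
      simp only [List.getLast?_singleton, Option.some_inj] at h
      exact h.symm
    rw [this]
    rfl
  · rw [List.concat_eq_append] at hy
    subst hy
    rw [uMid_append]
    have : c = b := by
      rw [show a :: (y ++ [c]) = (a :: y) ++ [c] from rfl, List.getLast?_concat,
        Option.some_inj] at h
      exact h
    rw [this]

/-- the letter interpretation on the annotated alphabet -/
def psiU : Option A × A → U :=
  fun c => match c.1 with
    | none => vaF ψ c.2
    | some a' => P (raF ψ a') (laF ψ c.2) * vaF ψ c.2

theorem foldl_psiU (w : List A) : ∀ (c : A) (m : U),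
    ((ASP.go (some c) w).map (psiU ψ)).foldl (· * ·) m = (uMid ψ m (raF ψ c) w).1 := by
  induction w with
  | nil => intro c m; rfl
  | cons b w ih =>
    intro c m
    rw [ASP.go_cons, List.map_cons, List.foldl_cons]
    rw [show psiU ψ (some c, b) = P (raF ψ c) (laF ψ b) * vaF ψ b from rfl]
    rw [ih b, uMid_cons, ← mul_assoc]

theorem evalWord_psiU (a : A) (w : List A) :
    evalWord (psiU ψ) (ASP.go none (a :: w)) = some ((uMid ψ (vaF ψ a) (raF ψ a) w).1) := by
  rw [ASP.go_cons, evalWord_cons, Option.some_inj,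
    show psiU ψ (none, a) = vaF ψ a from rfl, foldl_psiU]

end ReesLemmas

theorem rect_isRegular {K1 K2 : Language A} (h1 : K1.IsRegular) (h2 : K2.IsRegular) :
    (PadL (fun u v => u ∈ K1 ∧ v ∈ K2)).IsRegular := by
  obtain ⟨σ1, _, D1, rfl⟩ := h1
  obtain ⟨σ2, _, D2, rfl⟩ := h2
  refine ⟨Option (σ1 × σ2 × Bool × Bool), inferInstance, rectDFA D1 D2, ?_⟩
  ext x
  rw [DFA.mem_accepts]
  constructor
  · intro hacc
    obtain ⟨u, v, hq, -, -, hs, ht⟩ :=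
      rectDFA_sound D1 D2 x D1.start D2.start false false hacc
    exact ⟨u, v, ⟨hs, ht⟩, hq⟩
  · rintro ⟨u, v, ⟨hu, hv⟩, rfl⟩
    obtain ⟨fx', fy', hev⟩ := rectDFA_complete D1 D2 u v D1.start D2.start false false
      (by simp) (by simp)
    show (rectDFA D1 D2).evalFrom (rectDFA D1 D2).start (padMap u v) ∈ _
    rw [show (rectDFA D1 D2).start = some (D1.start, D2.start, false, false) from rfl, hev]
    exact ⟨_, _, fx', fy', rfl, hu, hv⟩

section Assembly
open AutoSg

variable {U I J : Type*} [Semigroup U] {P : J → I → U} {A : Type}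

theorem getLast?_ex (a : A) (w' : List A) : ∃ b, (a :: w').getLast? = some b := by
  rcases (a :: w').eq_nil_or_concat with h | ⟨ys, b, h⟩
  · exact absurd h (by simp)
  · exact ⟨b, by rw [h, List.concat_eq_append, List.getLast?_concat]⟩

theorem main_aux [Finite A] (ψ : A → ReesMatrix U I J P) (L : Language A)
    (H : IsAutomaticStructure (ReesMatrix U I J P) ψ L) (i : I) (j : J) :
    IsAutomaticSemigroup U := by
  classical
  haveI : Fintype A := Fintype.ofFinite A
  -- coordinate conditions and the restricted language
  set K : Language A := {w | (∃ a w', w = a :: w' ∧ laF ψ a = i) ∧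
    (∃ b, w.getLast? = some b ∧ raF ψ b = j)} with hK
  set LT : Language A := {w | w ∈ L ∧ w ∈ K} with hLT
  have hNE : ∀ w ∈ L, w ≠ [] := H.nonempty_words
  -- mid values of LT-words
  have midL : ∀ w ∈ LT, ∃ m : U, evalWord ψ w = some (rmk P i m j) ∧
      evalWord (psiU ψ) (go none w) = some m := by
    rintro w ⟨hwL, ⟨a, w', rfl, hla⟩, ⟨b, hb, hrb⟩⟩
    refine ⟨(uMid ψ (vaF ψ a) (raF ψ a) w').1, ?_, evalWord_psiU ψ a w'⟩
    rw [evalWord_rees, Option.some_inj, hla, uMid_snd_cons ψ a w' b hb, hrb]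
  have LT_of_eval : ∀ w ∈ L, ∀ m : U, evalWord ψ w = some (rmk P i m j) → w ∈ LT := by
    intro w hwL m hev
    cases w with
    | nil => exact absurd rfl (hNE [] hwL)
    | cons a w' =>
      rw [evalWord_rees, Option.some_inj] at hev
      obtain ⟨h1, h2, h3⟩ := rmk_inj hev
      obtain ⟨b, hb⟩ := getLast?_ex a w'
      rw [uMid_snd_cons ψ a w' b hb] at h3
      exact ⟨hwL, ⟨a, w', rfl, h1⟩, ⟨b, hb, h3⟩⟩
  have midL_unique : ∀ w ∈ LT, ∀ m : U, evalWord ψ w = some (rmk P i m j) →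
      evalWord (psiU ψ) (go none w) = some m := by
    intro w hw m hev
    obtain ⟨m', he', hu'⟩ := midL w hw
    rw [hev, Option.some_inj] at he'
    obtain ⟨-, h2, -⟩ := rmk_inj he'
    rwa [← h2] at hu'
  -- regular languages from the automatic structure, in PadL form
  set Erel : List A → List A → Prop :=
    fun u v => u ∈ L ∧ v ∈ L ∧ evalWord ψ u = evalWord ψ v with hErel
  have hE : (PadL Erel).IsRegular := by
    refine isRegular_congr H.eq_regular ?_
    intro x
    constructor
    · rintro ⟨u, hu, v, hv, rfl, he⟩
      exact ⟨u, v, ⟨hu, hv, he⟩, rfl⟩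
    · rintro ⟨u, v, ⟨hu, hv, he⟩, rfl⟩
      exact ⟨u, hu, v, hv, rfl, he⟩
  set Mrel : A → List A → List A → Prop :=
    fun a u v => u ∈ L ∧ v ∈ L ∧ evalWord ψ (u ++ [a]) = evalWord ψ v with hMrel
  have hM : ∀ a : A, (PadL (Mrel a)).IsRegular := by
    intro a
    refine isRegular_congr (H.mul_regular a) ?_
    intro x
    constructor
    · rintro ⟨u, hu, v, hv, rfl, he⟩
      exact ⟨u, v, ⟨hu, hv, he⟩, rfl⟩
    · rintro ⟨u, v, ⟨hu, hv, he⟩, rfl⟩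
      exact ⟨u, hu, v, hv, rfl, he⟩
  -- multiplication by an arbitrary word
  have hRw : ∀ w₀ : List A, w₀ ≠ [] →
      (PadL (fun u v => u ∈ L ∧ v ∈ L ∧
        evalWord ψ (u ++ w₀) = evalWord ψ v)).IsRegular := by
    intro w₀
    induction w₀ using List.reverseRecOn with
    | nil => intro h; exact absurd rfl h
    | append_singleton y a ih =>
      intro _
      rcases eq_or_ne y [] with rfl | hy
      · simpa using hM a
      · have hrel : ∀ u v, (∃ z, (u ∈ L ∧ z ∈ L ∧ evalWord ψ (u ++ y) = evalWord ψ z)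
            ∧ Mrel a z v) ↔
            (u ∈ L ∧ v ∈ L ∧ evalWord ψ (u ++ (y ++ [a])) = evalWord ψ v) := by
          intro u v
          constructor
          · rintro ⟨z, ⟨huL, hzL, h1⟩, ⟨-, hvL, h2⟩⟩
            refine ⟨huL, hvL, ?_⟩
            obtain ⟨s, hs⟩ := evalWord_some ψ (show u ++ y ≠ [] by
              simp [hNE u huL])
            rw [← List.append_assoc]
            rw [evalWord_append_singleton ψ hs a]
            rw [hs] at h1
            rw [← h2, evalWord_append_singleton ψ h1.symm a]
          · rintro ⟨huL, hvL, he⟩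
            obtain ⟨s, hs⟩ := evalWord_some ψ (show u ++ y ≠ [] by
              simp [hNE u huL])
            obtain ⟨z, hzL, hz⟩ := H.onto s
            refine ⟨z, ⟨huL, hzL, by rw [hs, hz]⟩, hzL, hvL, ?_⟩
            rw [evalWord_append_singleton ψ hz a, ← evalWord_append_singleton ψ hs a,
              List.append_assoc]
            exact he
        rw [← PadL_congr hrel]
        exact isRegular_comp (ih hy) (hM a)
  -- good: now the structure for U
  set C := (Option A × A) with hC
  haveI : Finite C := inferInstance
  set ψU : C → U := psiU ψ with hψU
  set LU : Language C := {q | ∃ w ∈ LT, q = go none w} with hLU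
  have hLTne : ∀ w ∈ LT, w ≠ [] := fun w hw => hNE w hw.1
  have hLUmem : ∀ w ∈ LT, go none w ∈ LU := fun w hw => ⟨w, hw, rfl⟩
  refine ⟨C, inferInstance, ψU, LU, ?_, ?_, ?_, ?_, ?_⟩
  -- nonempty words
  · rintro q ⟨w, hw, rfl⟩
    cases w with
    | nil => exact absurd rfl (hLTne [] hw)
    | cons a w' => simp [go_cons]
  -- regularity of LU
  · have hKreg : Language.IsRegular K := by
      refine isRegular_congr
        (isRegular_inter (isRegular_firstIn (fun a => laF ψ a = i))
          (isRegular_lastIn (fun b => raF ψ b = j))) ?_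
      intro x; exact Iff.rfl
    have hLTreg : Language.IsRegular LT :=
      isRegular_congr (isRegular_inter H.regular hKreg) (fun x => Iff.rfl)
    refine isRegular_congr
      (isRegular_inter (isRegular_preimage_map Prod.snd hLTreg)
        isRegular_cons_lang) ?_
    intro q
    constructor
    · rintro ⟨hq1, w, hwne, rfl⟩
      erw [lang_mem_setOf_eq, go_snd] at hq1
      exact ⟨w, hq1, rfl⟩
    · rintro ⟨w, hw, rfl⟩
      refine ⟨?_, w, hLTne w hw, rfl⟩
      erw [lang_mem_setOf_eq, go_snd]
      exact hw
  -- onto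
  · intro u0
    obtain ⟨w, hwL, hwe⟩ := H.onto (rmk P i u0 j)
    have hwT : w ∈ LT := LT_of_eval w hwL u0 hwe
    exact ⟨go none w, hLUmem w hwT, midL_unique w hwT u0 hwe⟩
  -- equality language
  · set EqT : List A → List A → Prop :=
      fun u v => u ∈ LT ∧ v ∈ LT ∧ evalWord ψ u = evalWord ψ v with hEqT
    have hEqTreg : (PadL EqT).IsRegular := by
      have hiff : ∀ u v, (Erel u v ∧ (u ∈ K ∧ v ∈ (Set.univ : Set (List A)))) ↔ EqT u v := by
        intro u v
        constructor
        · rintro ⟨⟨huL, hvL, he⟩, hk, -⟩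
          have huT : u ∈ LT := ⟨huL, hk⟩
          obtain ⟨m, hm, -⟩ := midL u huT
          refine ⟨huT, LT_of_eval v hvL m (by rw [← he, hm]), he⟩
        · rintro ⟨⟨huL, hk⟩, ⟨hvL, hk'⟩, he⟩
          exact ⟨⟨huL, hvL, he⟩, hk, trivial⟩
      rw [← PadL_congr hiff, PadL_inter]
      refine isRegular_inter hE ?_
      · refine rect_isRegular ?_ ?_
        · refine isRegular_congr
            (isRegular_inter (isRegular_firstIn (fun a => laF ψ a = i))
              (isRegular_lastIn (fun b => raF ψ b = j))) ?_
          intro x; exact Iff.rfl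
        · exact isRegular_univ
    -- the image description
    refine isRegular_congr
      (isRegular_inter (isRegular_preimage_map gmap hEqTreg)
        (rect_isRegular isRegular_cons_lang isRegular_cons_lang)) ?_
    intro x
    constructor
    · rintro ⟨hx1, hx2⟩
      obtain ⟨c1, c2, ⟨⟨w1, hw1ne, rfl⟩, ⟨w2, hw2ne, rfl⟩⟩, rfl⟩ := hx2
      erw [lang_mem_setOf_eq, gmap_padMap] at hx1
      obtain ⟨u, v, ⟨huT, hvT, he⟩, heq⟩ := hx1
      obtain ⟨he1, he2⟩ := padMap_inj heq
      rw [← he1] at huT he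
      rw [← he2] at hvT he
      obtain ⟨mu, hmu, hmu'⟩ := midL w1 huT
      obtain ⟨mv, hmv, hmv'⟩ := midL w2 hvT
      refine ⟨go none w1, hLUmem w1 huT, go none w2, hLUmem w2 hvT, rfl, ?_⟩
      rw [hmu', hmv', Option.some_inj]
      rw [hmu, hmv, Option.some_inj] at he
      exact (rmk_inj he).2.1
    · rintro ⟨u', ⟨u, huT, rfl⟩, v', ⟨v, hvT, rfl⟩, rfl, he⟩
      obtain ⟨mu, hmu, hmu'⟩ := midL u huT
      obtain ⟨mv, hmv, hmv'⟩ := midL v hvT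
      rw [hmu', hmv', Option.some_inj] at he
      subst he
      constructor
      · erw [lang_mem_setOf_eq, gmap_padMap]
        exact ⟨u, v, ⟨huT, hvT, by rw [hmu, hmv]⟩, rfl⟩
      · exact ⟨go none u, go none v,
          ⟨⟨u, hLTne u huT, rfl⟩, ⟨v, hLTne v hvT, rfl⟩⟩, rfl⟩
  -- multiplication language
  · intro c
    set xc : U := ψU c with hxc
    -- elements and representative words
    set tS : A → ReesMatrix U I J P := fun a => rmk P (laF ψ a) (vaF ψ a * xc) j with htS
    have hwt : ∀ a : A, ∃ w ∈ L, evalWord ψ w = some (tS a) := fun a => H.onto (tS a)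
    choose wt hwtL hwtE using hwt
    set sElt : A → ReesMatrix U I J P := fun a => rmk P i (vaF ψ a * xc) j with hsElt
    have hwr : ∀ a : A, ∃ w ∈ L, evalWord ψ w = some (sElt a) := fun a => H.onto (sElt a)
    choose wr hwrL hwrE using hwr
    -- the two kinds of relations
    set CFrel : A → List A → List A → Prop := fun a u v =>
      ∃ z, Mrel a z u ∧ (z ∈ L ∧ v ∈ L ∧ evalWord ψ (z ++ wt a) = evalWord ψ v) with hCFrel
    set Sgrel : A → List A → List A → Prop := fun a u v =>
      ∃ z, (u = [a] ∧ z = wr a) ∧ Erel z v with hSgrel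
    set BigRel : List A → List A → Prop := fun u v =>
      (u ∈ L ∧ u ∈ K) ∧ ((∃ a, CFrel a u v) ∨ (∃ a, Sgrel a u v)) with hBigRel
    -- the key semantic identity
    have key : ∀ u v, (u ∈ LT ∧ v ∈ LT ∧ (∃ mu mv : U,
        evalWord ψ u = some (rmk P i mu j) ∧ evalWord ψ v = some (rmk P i mv j) ∧
        mv = mu * xc)) ↔ BigRel u v := by
      intro u v
      constructor
      · rintro ⟨huT, hvT, mu, mv, hmu, hmv, rfl⟩
        refine ⟨⟨huT.1, huT.2⟩, ?_⟩
        rcases u.eq_nil_or_concat with rfl | ⟨u₀, a, hu⟩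
        · exact absurd rfl (hLTne [] huT)
        rw [List.concat_eq_append] at hu
        subst hu
        rcases eq_or_ne u₀ [] with rfl | hu₀
        · -- singleton case
          refine Or.inr ⟨a, wr a, ⟨by simp, rfl⟩, hwrL a, hvT.1, ?_⟩
          have : evalWord ψ [a] = some (ψ a) := rfl
          rw [show ([] : List A) ++ [a] = [a] from rfl] at hmu
          rw [this, Option.some_inj] at hmu
          have hmueq : mu = vaF ψ a := by
            have h' : rmk P (laF ψ a) (vaF ψ a) (raF ψ a) = rmk P i mu j :=
              (psi_eq ψ a).symm.trans hmu
            exact (rmk_inj h').2.1.symm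
          rw [hwrE a, hmv, hsElt, hmueq]
        · -- composition case
          obtain ⟨s₀, hs₀⟩ := evalWord_some ψ hu₀
          obtain ⟨z, hzL, hz⟩ := H.onto s₀
          refine Or.inl ⟨a, z, ⟨hzL, huT.1, ?_⟩, hzL, hvT.1, ?_⟩
          · rw [evalWord_append_singleton ψ hz a, evalWord_append_singleton ψ hs₀ a]
          · rw [evalWord_append ψ hz (hwtE a), hmv, Option.some_inj]
            have h1 : evalWord ψ (u₀ ++ [a]) = some (s₀ * ψ a) :=
              evalWord_append_singleton ψ hs₀ a
            rw [hmu, Option.some_inj] at h1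
            have hs₀e : s₀ = rmk P (cmp s₀).1 (cmp s₀).2.1 (cmp s₀).2.2 := rfl
            rw [hs₀e] at h1 ⊢
            rw [show rmk P (cmp s₀).1 (cmp s₀).2.1 (cmp s₀).2.2 * ψ a
              = rmk P (cmp s₀).1 ((cmp s₀).2.1 * P (cmp s₀).2.2 (laF ψ a) * vaF ψ a)
                (raF ψ a) from rfl] at h1
            obtain ⟨hl, hm, hr⟩ := rmk_inj h1.symm
            rw [show rmk P (cmp s₀).1 (cmp s₀).2.1 (cmp s₀).2.2 * tS a
              = rmk P (cmp s₀).1 ((cmp s₀).2.1 * P (cmp s₀).2.2 (laF ψ a)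
                * (vaF ψ a * xc)) j from rfl]
            rw [← hl]
            have : (cmp s₀).2.1 * P (cmp s₀).2.2 (laF ψ a) * (vaF ψ a * xc)
                = ((cmp s₀).2.1 * P (cmp s₀).2.2 (laF ψ a) * vaF ψ a) * xc := by
              rw [mul_assoc ((cmp s₀).2.1 * P (cmp s₀).2.2 (laF ψ a)) (vaF ψ a) xc]
            rw [this, ← hm]
      · rintro ⟨⟨huL, huK⟩, hbig⟩
        have huT : u ∈ LT := ⟨huL, huK⟩
        obtain ⟨mu, hmu, -⟩ := midL u huT
        rcases hbig with ⟨a, z, ⟨hzL, -, h1⟩, -, hvL, h2⟩ | ⟨a, z, ⟨rfl, rfl⟩, -, hvL, h2⟩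
        · obtain ⟨sz, hsz⟩ := evalWord_some ψ (hNE z hzL)
          have he1 : evalWord ψ (z ++ [a]) = some (sz * ψ a) :=
            evalWord_append_singleton ψ hsz a
          rw [h1, hmu, Option.some_inj] at he1
          have he2 : evalWord ψ (z ++ wt a) = some (sz * tS a) :=
            evalWord_append ψ hsz (hwtE a)
          rw [h2] at he2
          have hsze : sz = rmk P (cmp sz).1 (cmp sz).2.1 (cmp sz).2.2 := rfl
          rw [hsze] at he1 he2
          rw [show rmk P (cmp sz).1 (cmp sz).2.1 (cmp sz).2.2 * ψ a
            = rmk P (cmp sz).1 ((cmp sz).2.1 * P (cmp sz).2.2 (laF ψ a) * vaF ψ a)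
              (raF ψ a) from rfl] at he1
          obtain ⟨hl, hm, hr⟩ := rmk_inj he1
          rw [show rmk P (cmp sz).1 (cmp sz).2.1 (cmp sz).2.2 * tS a
            = rmk P (cmp sz).1 ((cmp sz).2.1 * P (cmp sz).2.2 (laF ψ a)
              * (vaF ψ a * xc)) j from rfl] at he2
          have hassoc : (cmp sz).2.1 * P (cmp sz).2.2 (laF ψ a) * (vaF ψ a * xc)
              = ((cmp sz).2.1 * P (cmp sz).2.2 (laF ψ a) * vaF ψ a) * xc := by
            rw [mul_assoc ((cmp sz).2.1 * P (cmp sz).2.2 (laF ψ a)) (vaF ψ a) xc]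
          rw [hassoc, ← hm, ← hl] at he2
          have hvT : v ∈ LT := LT_of_eval v hvL (mu * xc) he2
          exact ⟨huT, hvT, mu, mu * xc, hmu, he2, rfl⟩
        · -- singleton case backwards
          have hmueq : mu = vaF ψ a := by
            have : evalWord ψ [a] = some (rmk P (laF ψ a) (vaF ψ a) (raF ψ a)) := rfl
            rw [this, Option.some_inj] at hmu
            exact (rmk_inj hmu).2.1.symm
          rw [hwrE a] at h2
          have he2 : evalWord ψ v = some (rmk P i (mu * xc) j) := by
            rw [← h2, hsElt, hmueq]
          have hvT : v ∈ LT := LT_of_eval v hvL (mu * xc) he2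
          exact ⟨huT, hvT, mu, mu * xc, hmu, he2, rfl⟩
    -- regularity of the big relation
    have hBigReg : (PadL BigRel).IsRegular := by
      have h1 : (PadL (fun u v => u ∈ L ∧ u ∈ K)).IsRegular := by
        have := rect_isRegular (K1 := {w | w ∈ L ∧ w ∈ K})
          (K2 := (Set.univ : Set (List A)))
          (isRegular_congr (isRegular_inter H.regular (isRegular_congr
            (isRegular_inter (isRegular_firstIn (fun a => laF ψ a = i))
              (isRegular_lastIn (fun b => raF ψ b = j))) (fun x => Iff.rfl)))
            (fun x => Iff.rfl))
          isRegular_univ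
        refine isRegular_congr this ?_
        intro x
        constructor
        · rintro ⟨u, v, ⟨⟨h1, h2⟩, -⟩, rfl⟩
          exact ⟨u, v, ⟨h1, h2⟩, rfl⟩
        · rintro ⟨u, v, ⟨h1, h2⟩, rfl⟩
          exact ⟨u, v, ⟨⟨h1, h2⟩, trivial⟩, rfl⟩
      have hCF : ∀ a : A, (PadL (CFrel a)).IsRegular := by
        intro a
        have hflip : (PadL (fun u v => Mrel a v u)).IsRegular := by
          refine isRegular_congr (isRegular_preimage_map Prod.swap (hM a)) ?_
          intro x
          constructor
          · intro hx
            erw [lang_mem_setOf_eq] at hx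
            obtain ⟨z, u, hr, he⟩ := hx
            refine ⟨u, z, hr, ?_⟩
            have : (x.map Prod.swap).map Prod.swap = x := by
              rw [List.map_map]
              simp
            rw [← this, he, map_swap_padMap]
          · rintro ⟨u, z, hr, rfl⟩
            erw [lang_mem_setOf_eq, map_swap_padMap]
            exact ⟨z, u, hr, rfl⟩
        exact isRegular_comp hflip (hRw (wt a) (hNE (wt a) (hwtL a)))
      have hSg : ∀ a : A, (PadL (Sgrel a)).IsRegular := by
        intro a
        refine isRegular_comp ?_ hE
        refine isRegular_congr (isRegular_singleton (padMap [a] (wr a))) ?_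
        intro x
        constructor
        · intro hx
          exact ⟨[a], wr a, ⟨rfl, rfl⟩, hx⟩
        · rintro ⟨u, v, ⟨rfl, rfl⟩, rfl⟩
          rfl
      have hUnion : (PadL (fun u v => (∃ a, CFrel a u v) ∨ (∃ a, Sgrel a u v))).IsRegular := by
        rw [PadL_union]
        refine isRegular_union ?_ ?_
        · refine isRegular_congr
            (isRegular_finUnion (fun a => PadL (CFrel a)) hCF) ?_
          intro x
          constructor
          · rintro ⟨a, u, v, hr, rfl⟩
            exact ⟨u, v, ⟨a, hr⟩, rfl⟩
          · rintro ⟨u, v, ⟨a, hr⟩, rfl⟩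
            exact ⟨a, u, v, hr, rfl⟩
        · refine isRegular_congr
            (isRegular_finUnion (fun a => PadL (Sgrel a)) hSg) ?_
          intro x
          constructor
          · rintro ⟨a, u, v, hr, rfl⟩
            exact ⟨u, v, ⟨a, hr⟩, rfl⟩
          · rintro ⟨u, v, ⟨a, hr⟩, rfl⟩
            exact ⟨a, u, v, hr, rfl⟩
      rw [show BigRel = fun u v => (u ∈ L ∧ u ∈ K) ∧
        ((∃ a, CFrel a u v) ∨ (∃ a, Sgrel a u v)) from rfl, PadL_inter]
      exact isRegular_inter h1 hUnion
    -- assemble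
    refine isRegular_congr
      (isRegular_inter (isRegular_preimage_map gmap hBigReg)
        (rect_isRegular isRegular_cons_lang isRegular_cons_lang)) ?_
    intro x
    constructor
    · rintro ⟨hx1, hx2⟩
      obtain ⟨c1, c2, ⟨⟨w1, hw1ne, rfl⟩, ⟨w2, hw2ne, rfl⟩⟩, rfl⟩ := hx2
      erw [lang_mem_setOf_eq, gmap_padMap] at hx1
      obtain ⟨u, v, hbig, heq⟩ := hx1
      obtain ⟨he1, he2⟩ := padMap_inj heq
      rw [← he1, ← he2] at hbig
      obtain ⟨huT, hvT, mu, mv, hmu, hmv, hmul⟩ := (key w1 w2).mpr hbig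
      refine ⟨go none w1, hLUmem w1 huT, go none w2, hLUmem w2 hvT, rfl, ?_⟩
      have h1 : evalWord ψU (go none w1) = some mu := midL_unique w1 huT mu hmu
      have h2 : evalWord ψU (go none w2) = some mv := midL_unique w2 hvT mv hmv
      rw [evalWord_append_singleton ψU h1 c, h2, Option.some_inj, hmul]
    · rintro ⟨u', ⟨u, huT, rfl⟩, v', ⟨v, hvT, rfl⟩, rfl, he⟩
      obtain ⟨mu, hmu, hmu'⟩ := midL u huT
      obtain ⟨mv, hmv, hmv'⟩ := midL v hvT
      rw [evalWord_append_singleton ψU hmu' c, hmv', Option.some_inj] at he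
      constructor
      · erw [lang_mem_setOf_eq, gmap_padMap]
        exact ⟨u, v, (key u v).mp ⟨huT, hvT, mu, mv, hmu, hmv, he.symm⟩, rfl⟩
      · exact ⟨go none u, go none v,
          ⟨⟨u, hLTne u huT, rfl⟩, ⟨v, hLTne v hvT, rfl⟩⟩, rfl⟩

end Assembly

end ASP

open AutoSg in
/-- If some entry `p` of `P` satisfies `pU¹ = U`, then automaticity of the Rees matrix
semigroup `M[U; I, J; P]` implies automaticity of the base semigroup `U`. -/
theorem reesMatrix_base_automatic (U I J : Type*) [Semigroup U] (P : J → I → U)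
    (hp : ∃ j i, ∀ u : U, u = P j i ∨ ∃ v : U, u = P j i * v)
    (hS : IsAutomaticSemigroup (ReesMatrix U I J P)) :
    IsAutomaticSemigroup U := by
  obtain ⟨j, i, -⟩ := hp
  obtain ⟨A, hA, ψ, L, H⟩ := hS
  haveI := hA
  exact ASP.main_aux ψ L H i j
end
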